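/- arXiv:2203.04247 — 4 statements merged into one kernel-verified Lean document; each statement's English description precedes it below -/
import Mathlib

section
/- Let 0 < γ < mn, δ ∈ ℝ, and p⃗ a vector of exponents. Let v_1,…,v_m be weights and set w = Π_{i=1}^m v_i. If (w,v⃗) ∈ ℍ_m(p⃗,γ,δ), then necessarily δ = γ - n/p. -/
open MeasureTheory Metric Set
open scoped ENNReal NNReal BigOperators Classical

noncomputable section

/-- Euclidean `n`-space. -/
abbrev Rn (n : ℕ) := EuclideanSpace ℝ (Fin n)

/-- The conjugate exponent in `ℝ≥0∞`. -/
def conjE (q : ℝ≥0∞) : ℝ≥0∞ :=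
  if q = 1 then ∞ else if q = ∞ then 1
  else ENNReal.ofReal (q.toReal / (q.toReal - 1))

lemma aux_rpow_sum {x : ℝ≥0∞} (hx : x ≠ 0) (hx' : x ≠ ∞) {ι : Type*} (s : Finset ι) (f : ι → ℝ) :
    x ^ (∑ i ∈ s, f i) = ∏ i ∈ s, x ^ f i := by
  induction s using Finset.cons_induction with
  | empty => simp
  | cons i s hi ih => rw [Finset.sum_cons, Finset.prod_cons, ENNReal.rpow_add _ _ hx hx', ih]

lemma conjE_cases {p : ℝ≥0∞} (hp : 1 ≤ p) :
    conjE p = ∞ ∨ (conjE p ≠ ∞ ∧ 1 ≤ (conjE p).toReal) := by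
  rcases eq_or_ne p 1 with h1 | h1
  · left; simp [conjE, h1]
  rcases eq_or_ne p ∞ with hi | hi
  · right; simp [conjE, hi]
  · right
    have ht : 1 < p.toReal := by
      rw [← ENNReal.toReal_one]
      exact ENNReal.toReal_lt_toReal ENNReal.one_ne_top hi |>.2 (lt_of_le_of_ne hp (Ne.symm h1))
    have hu : 1 ≤ p.toReal / (p.toReal - 1) := by
      rw [le_div_iff₀ (by linarith)]; linarith
    simp only [conjE, h1, hi, if_false]
    refine ⟨ENNReal.ofReal_ne_top, ?_⟩
    rw [ENNReal.toReal_ofReal (by linarith)]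
    exact hu

lemma conjE_inv_toReal {p : ℝ≥0∞} (hp : 1 ≤ p) :
    (((conjE p)).toReal)⁻¹ = 1 - ((p)⁻¹).toReal := by
  rcases eq_or_ne p 1 with h1 | h1
  · simp [conjE, h1]
  rcases eq_or_ne p ∞ with hi | hi
  · simp [conjE, hi]
  · have ht : 1 < p.toReal := by
      rw [← ENNReal.toReal_one]
      exact ENNReal.toReal_lt_toReal ENNReal.one_ne_top hi |>.2 (lt_of_le_of_ne hp (Ne.symm h1))
    simp only [conjE, h1, hi, if_false, ENNReal.toReal_inv]
    rw [ENNReal.toReal_ofReal (div_nonneg (by linarith) (by linarith))]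
    field_simp


lemma aux_rpow_ne_zero {x : ℝ≥0∞} (hx : x ≠ 0) (hx' : x ≠ ∞) (y : ℝ) : x ^ y ≠ 0 :=
  (ENNReal.rpow_pos (pos_iff_ne_zero.2 hx) hx').ne'

lemma aux_rpow_ne_top {x : ℝ≥0∞} (hx : x ≠ 0) (hx' : x ≠ ∞) (y : ℝ) : x ^ y ≠ ∞ := by
  rcases le_or_gt 0 y with h | h
  · exact ENNReal.rpow_ne_top_of_nonneg h hx'
  · rw [← neg_neg y, ENNReal.rpow_neg]
    exact ENNReal.inv_ne_top.2 (aux_rpow_ne_zero hx hx' _)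


lemma holder_lower {α : Type*} [MeasurableSpace α] (μ : Measure α) {m : ℕ} (hm : 1 ≤ m)
    (v : Fin m → α → ℝ≥0∞) (hvm : ∀ i, AEMeasurable (v i) μ)
    (hpos : ∀ i, ∀ᵐ x ∂μ, 0 < v i x ∧ v i x < ∞)
    (q : Fin m → ℝ≥0∞) (hq1 : ∀ i, q i = ∞ ∨ (q i ≠ ∞ ∧ 1 ≤ (q i).toReal))
    (hV0 : μ Set.univ ≠ 0) (hVt : μ Set.univ ≠ ∞) :
    μ Set.univ ^ (∑ i, ((q i).toReal)⁻¹) ≤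
      essSup (fun x => ∏ i, v i x) μ *
        ∏ i, (if q i = ∞ then essSup (fun x => (v i x)⁻¹) μ
              else (∫⁻ x, ((v i x)⁻¹) ^ (q i).toReal ∂μ) ^ ((q i).toReal)⁻¹) := by
  classical
  have hm0 : (m : ℝ) ≠ 0 := Nat.cast_ne_zero.2 (by omega)
  have hmpos : (0:ℝ) < m := by positivity
  set V := μ Set.univ with hV
  set r : Fin m → ℝ := fun i => ((q i).toReal)⁻¹ with hrdef
  have hr0 : ∀ i, 0 ≤ r i := fun i => inv_nonneg.2 ENNReal.toReal_nonneg
  have hr1 : ∀ i, r i ≤ 1 := by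
    intro i
    rcases hq1 i with h | ⟨h, h'⟩
    · simp [hrdef, h]
    · exact inv_le_one_of_one_le₀ h'
  set W := essSup (fun x => ∏ i, v i x) μ with hW
  set S : Fin m → ℝ≥0∞ := fun i => if q i = ∞ then essSup (fun x => (v i x)⁻¹) μ else 1
    with hS
  set G : Fin m → α → ℝ≥0∞ :=
    fun i x => if q i = ∞ then 1 else ((v i x)⁻¹) ^ (q i).toReal with hG
  set N : Fin m → ℝ≥0∞ := fun i => ∫⁻ x, G i x ∂μ with hN
  have hGmeas : ∀ i, AEMeasurable (G i) μ := by
    intro i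
    by_cases h : q i = ∞
    · simp only [hG, h, if_true]; exact aemeasurable_const
    · simp only [hG, h, if_false]
      exact (hvm i).inv.pow_const _
  -- the target product equals S i * N i ^ r i
  have hF : ∀ i, (if q i = ∞ then essSup (fun x => (v i x)⁻¹) μ
        else (∫⁻ x, ((v i x)⁻¹) ^ (q i).toReal ∂μ) ^ ((q i).toReal)⁻¹)
      = S i * N i ^ r i := by
    intro i
    by_cases h : q i = ∞
    · simp [hS, hN, hrdef, h]
    · simp [hS, hN, hG, hrdef, h]
  simp only [hF]
  rw [Finset.prod_mul_distrib, ← mul_assoc]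
  -- trivial case : W * ∏ S = ∞
  by_cases hWS : W * ∏ i, S i = ∞
  · refine le_top.trans_eq ?_
    symm
    rw [ENNReal.mul_eq_top]
    right
    refine ⟨hWS, ?_⟩
    refine (CanonicallyOrderedAdd.prod_pos.2 ?_).ne'
    intro i _
    by_cases h : q i = ∞
    · have : r i = 0 := by simp [hrdef, h]
      simp [this]
    · rcases hq1 i with h' | ⟨_, h'⟩
      · exact absurd h' h
      have hNpos : 0 < N i := by
        rw [pos_iff_ne_zero]
        intro hzero
        have hG0 : G i =ᵐ[μ] 0 := (lintegral_eq_zero_iff' (hGmeas i)).1 hzero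
        have hae := (hpos i).and hG0
        have hμne : μ ≠ 0 := fun h0 => hV0 (by simp [hV, h0])
        have hne : (Filter.NeBot (ae μ)) := ae_neBot.2 hμne
        obtain ⟨x, ⟨hx1, hx2⟩, hx3⟩ := hae.exists
        have hvpos : 0 < (v i x)⁻¹ := ENNReal.inv_pos.2 hx2.ne
        have : 0 < G i x := by
          simp only [hG, h, if_false]
          exact ENNReal.rpow_pos hvpos (by simpa using hx1.ne')
        rw [hx3] at this
        simp at this
      exact ENNReal.rpow_pos_of_nonneg hNpos (hr0 i)
  -- main case
  · have hWae : ∀ᵐ x ∂μ, (∏ i, v i x) ≤ W := ENNReal.ae_le_essSup _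
    have hSae : ∀ᵐ x ∂μ, ∀ i, (v i x)⁻¹ ≤ essSup (fun y => (v i y)⁻¹) μ :=
      ae_all_iff.2 fun i => ENNReal.ae_le_essSup _
    have hposall : ∀ᵐ x ∂μ, ∀ i, 0 < v i x ∧ v i x < ∞ := ae_all_iff.2 hpos
    have h1 : ∀ᵐ x ∂μ, (1:ℝ≥0∞) ≤
        (W * ∏ i, S i) ^ ((m:ℝ)⁻¹) * ∏ i, G i x ^ (r i * (m:ℝ)⁻¹) := by
      filter_upwards [hWae, hSae, hposall] with x hxW hxS hxpos
      have hstep : ∀ i, (v i x)⁻¹ ≤ S i * G i x ^ r i := by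
        intro i
        by_cases h : q i = ∞
        · have hri : r i = 0 := by simp [hrdef, h]
          simp only [hS, hG, h, if_true, hri, ENNReal.rpow_zero, mul_one]
          exact hxS i
        · rcases hq1 i with h' | ⟨_, h'⟩
          · exact absurd h' h
          have ht0 : (q i).toReal ≠ 0 := by linarith
          simp only [hS, hG, h, if_false, one_mul]
          rw [← ENNReal.rpow_mul, mul_inv_cancel₀ ht0, ENNReal.rpow_one]
      have hone : (1:ℝ≥0∞) = (∏ i, v i x) * ∏ i, (v i x)⁻¹ := by
        rw [← Finset.prod_mul_distrib]
        rw [Finset.prod_congr rfl (fun i _ =>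
          ENNReal.mul_inv_cancel ((hxpos i).1.ne') (hxpos i).2.ne)]
        simp
      have hle : (1:ℝ≥0∞) ≤ (W * ∏ i, S i) * ∏ i, G i x ^ r i := by
        rw [hone]
        calc (∏ i, v i x) * ∏ i, (v i x)⁻¹
            ≤ W * ∏ i, (S i * G i x ^ r i) :=
              mul_le_mul' hxW (Finset.prod_le_prod' fun i _ => hstep i)
          _ = (W * ∏ i, S i) * ∏ i, G i x ^ r i := by
              rw [Finset.prod_mul_distrib, mul_assoc]
      calc (1:ℝ≥0∞) = 1 ^ ((m:ℝ)⁻¹) := by rw [ENNReal.one_rpow]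
        _ ≤ ((W * ∏ i, S i) * ∏ i, G i x ^ r i) ^ ((m:ℝ)⁻¹) :=
            ENNReal.rpow_le_rpow hle (by positivity)
        _ = (W * ∏ i, S i) ^ ((m:ℝ)⁻¹) * (∏ i, G i x ^ r i) ^ ((m:ℝ)⁻¹) :=
            ENNReal.mul_rpow_of_nonneg _ _ (by positivity)
        _ = (W * ∏ i, S i) ^ ((m:ℝ)⁻¹) * ∏ i, G i x ^ (r i * (m:ℝ)⁻¹) := by
            rw [← ENNReal.prod_rpow_of_nonneg (by positivity : (0:ℝ) ≤ (m:ℝ)⁻¹)]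
            simp_rw [← ENNReal.rpow_mul]
    have hconst_ne : (W * ∏ i, S i) ^ ((m:ℝ)⁻¹) ≠ ∞ :=
      ENNReal.rpow_ne_top_of_nonneg (by positivity) hWS
    have h2 : V ≤ (W * ∏ i, S i) ^ ((m:ℝ)⁻¹) *
        ∫⁻ x, ∏ i, G i x ^ (r i * (m:ℝ)⁻¹) ∂μ := by
      calc V = ∫⁻ _, 1 ∂μ := lintegral_one.symm
        _ ≤ ∫⁻ x, (W * ∏ i, S i) ^ ((m:ℝ)⁻¹) * ∏ i, G i x ^ (r i * (m:ℝ)⁻¹) ∂μ :=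
            lintegral_mono_ae h1
        _ = _ := lintegral_const_mul' _ _ hconst_ne
    set θ : ℝ := 1 - ∑ i, (r i * (m:ℝ)⁻¹) with hθ
    have hsum_le : ∑ i, (r i * (m:ℝ)⁻¹) ≤ 1 := by
      have h := Finset.sum_le_sum (fun i (_ : i ∈ Finset.univ) =>
        mul_le_mul_of_nonneg_right (hr1 i) (by positivity : (0:ℝ) ≤ (m:ℝ)⁻¹))
      simpa [Finset.sum_const, Finset.card_univ, mul_inv_cancel₀ hm0] using h
    have hθ0 : 0 ≤ θ := by simp only [hθ]; linarith
    have h3 : ∫⁻ x, ∏ i, G i x ^ (r i * (m:ℝ)⁻¹) ∂μ ≤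
        V ^ θ * ∏ i, N i ^ (r i * (m:ℝ)⁻¹) := by
      have key := ENNReal.lintegral_prod_norm_pow_le (μ := μ) Finset.univ
        (f := fun o : Option (Fin m) => Option.elim o (fun _ => (1:ℝ≥0∞)) G)
        (p := fun o => Option.elim o θ (fun i => r i * (m:ℝ)⁻¹))
        (fun o _ => by
          cases o with
          | none => exact aemeasurable_const
          | some i => exact hGmeas i)
        (by
          rw [Fintype.sum_option]
          simp only [Option.elim]
          ring)
        (fun o _ => by
          cases o with
          | none => exact hθ0
          | some i => exact mul_nonneg (hr0 i) (by positivity))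
      rw [Fintype.prod_option] at key
      simp only [Option.elim] at key
      calc ∫⁻ x, ∏ i, G i x ^ (r i * (m:ℝ)⁻¹) ∂μ
          = ∫⁻ x, (1:ℝ≥0∞) ^ θ * ∏ i, G i x ^ (r i * (m:ℝ)⁻¹) ∂μ := by
            simp
        _ ≤ (∫⁻ _, (1:ℝ≥0∞) ∂μ) ^ θ * ∏ i, (∫⁻ x, G i x ∂μ) ^ (r i * (m:ℝ)⁻¹) := by
            refine le_trans ?_ key
            refine lintegral_mono fun x => ?_
            refine le_of_eq ?_
            rw [Fintype.prod_option]
        _ = V ^ θ * ∏ i, N i ^ (r i * (m:ℝ)⁻¹) := by rw [lintegral_one]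
    have h4 : V ≤ (W * ∏ i, S i) ^ ((m:ℝ)⁻¹) *
        (V ^ θ * ∏ i, N i ^ (r i * (m:ℝ)⁻¹)) := h2.trans (mul_le_mul_right h3 _)
    have h5 := ENNReal.rpow_le_rpow h4 (le_of_lt hmpos)
    have hRHS : ((W * ∏ i, S i) ^ ((m:ℝ)⁻¹) *
          (V ^ θ * ∏ i, N i ^ (r i * (m:ℝ)⁻¹))) ^ (m:ℝ)
        = ((W * ∏ i, S i) * ∏ i, N i ^ r i) * V ^ (θ * (m:ℝ)) := by
      rw [ENNReal.mul_rpow_of_nonneg _ _ hmpos.le,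
        ENNReal.mul_rpow_of_nonneg _ _ hmpos.le,
        ← ENNReal.rpow_mul, ← ENNReal.rpow_mul, inv_mul_cancel₀ hm0, ENNReal.rpow_one,
        ← ENNReal.prod_rpow_of_nonneg hmpos.le]
      have : ∀ i, (N i ^ (r i * (m:ℝ)⁻¹)) ^ (m:ℝ) = N i ^ r i := by
        intro i
        rw [← ENNReal.rpow_mul, mul_assoc, inv_mul_cancel₀ hm0, mul_one]
      rw [Finset.prod_congr rfl (fun i _ => this i)]
      ring
    have hLHS : V ^ (m:ℝ) = V ^ (∑ i, r i) * V ^ (θ * (m:ℝ)) := by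
      rw [← ENNReal.rpow_add _ _ hV0 hVt]
      congr 1
      have : (∑ i, r i * (m:ℝ)⁻¹) = (∑ i, r i) * (m:ℝ)⁻¹ := by
        rw [Finset.sum_mul]
      simp only [hθ, this]
      field_simp
      ring
    rw [hRHS, hLHS] at h5
    have hcan : V ^ (θ * (m:ℝ)) ≠ 0 ∧ V ^ (θ * (m:ℝ)) ≠ ∞ :=
      ⟨(ENNReal.rpow_pos (pos_iff_ne_zero.2 hV0) hVt).ne',
       ENNReal.rpow_ne_top_of_nonneg (by positivity) hVt⟩
    exact (ENNReal.mul_le_mul_iff_left hcan.1 hcan.2).1 h5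


/-- An `L^q`-type quantity on the set `s` for an `ℝ≥0∞`-valued function `g`:
the usual integral expression for `q < ∞`, and the essential supremum for `q = ∞`. -/
def lpOn {n : ℕ} (q : ℝ≥0∞) (g : Rn n → ℝ≥0∞) (s : Set (Rn n)) : ℝ≥0∞ :=
  if q = ∞ then essSup g (volume.restrict s)
  else (∫⁻ y in s, g y ^ q.toReal) ^ (1 / q.toReal)

/-- A weight: measurable, positive and finite a.e., and locally integrable. -/
def IsWeight {n : ℕ} (u : Rn n → ℝ≥0∞) : Prop :=
  Measurable u ∧ (∀ᵐ x ∂(volume : Measure (Rn n)), 0 < u x ∧ u x < ∞) ∧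
    ∀ (x : Rn n) (R : ℝ), 0 < R → ∫⁻ y in ball x R, u y < ∞

/-- The `i`-th factor in the `ℍ_m(p⃗,γ,δ)` condition, where `q = p_i'` is the
conjugate exponent of `p_i` (an essential supremum when `p_i = 1`). -/
def HmFactor {n : ℕ} (m : ℕ) (γi : ℝ) (q : ℝ≥0∞) (vi : Rn n → ℝ≥0∞)
    (xB : Rn n) (R : ℝ) : ℝ≥0∞ :=
  lpOn q
    (fun y => (vi y)⁻¹ *
      (volume (ball xB R) ^ ((n : ℝ)⁻¹) + edist xB y) ^
        (-((n : ℝ) - γi + 1 / (m : ℝ))))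
    Set.univ

/-- The class `ℍ_m(p⃗,γ,δ)` for a pair `(w, v⃗)`. -/
def Hm {n : ℕ} (m : ℕ) (γv : Fin m → ℝ) (δ : ℝ) (p : Fin m → ℝ≥0∞)
    (w : Rn n → ℝ≥0∞) (v : Fin m → Rn n → ℝ≥0∞) : Prop :=
  ∃ C : ℝ, 0 < C ∧ ∀ (xB : Rn n) (R : ℝ), 0 < R →
    essSup w (volume.restrict (ball xB R)) *
        volume (ball xB R) ^ (-((δ - 1) / (n : ℝ))) *
        ∏ i, HmFactor m (γv i) (conjE (p i)) (v i) xB R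
      ≤ ENNReal.ofReal C

/-- The global condition associated to `ℍ_m(p⃗,γ,δ)`. -/
def GlobalCond {n : ℕ} (m : ℕ) (γv : Fin m → ℝ) (δ : ℝ) (p : Fin m → ℝ≥0∞)
    (w : Rn n → ℝ≥0∞) (v : Fin m → Rn n → ℝ≥0∞) : Prop :=
  ∃ C : ℝ, 0 < C ∧ ∀ (xB : Rn n) (R : ℝ), 0 < R →
    essSup w (volume.restrict (ball xB R)) *
        volume (ball xB R) ^ (-((δ - 1) / (n : ℝ))) *
        ∏ i, lpOn (conjE (p i))
          (fun y => (v i y)⁻¹ * edist xB y ^ (-((n : ℝ) - γv i + 1 / (m : ℝ))))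
          (ball xB R)ᶜ
      ≤ ENNReal.ofReal C

/-- The local condition associated to `ℍ_m(p⃗,γ,δ)`. -/
def LocalCond {n : ℕ} (m : ℕ) (γ δ : ℝ) (p : Fin m → ℝ≥0∞)
    (w : Rn n → ℝ≥0∞) (v : Fin m → Rn n → ℝ≥0∞) : Prop :=
  ∃ C : ℝ, 0 < C ∧ ∀ (xB : Rn n) (R : ℝ), 0 < R →
    essSup w (volume.restrict (ball xB R)) *
        volume (ball xB R) ^
          (-(δ / (n : ℝ)) + γ / (n : ℝ) - ∑ i, ((p i)⁻¹).toReal) *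
        ∏ i, (volume (ball xB R) ^ (-(((conjE (p i))⁻¹).toReal)) *
          lpOn (conjE (p i)) (fun y => (v i y)⁻¹) (ball xB R))
      ≤ ENNReal.ofReal C

/-- The reverse Hölder class `RH_s`. -/
def memRH {n : ℕ} (s : ℝ) (u : Rn n → ℝ≥0∞) : Prop :=
  ∃ C : ℝ, 0 < C ∧ ∀ (x : Rn n) (R : ℝ), 0 < R →
    ((volume (ball x R))⁻¹ * ∫⁻ y in ball x R, u y ^ s) ^ (1 / s) ≤
      ENNReal.ofReal C * ((volume (ball x R))⁻¹ * ∫⁻ y in ball x R, u y)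

/-- The reverse Hölder class `RH_∞`. -/
def memRHinf {n : ℕ} (u : Rn n → ℝ≥0∞) : Prop :=
  ∃ C : ℝ, 0 < C ∧ ∀ (x : Rn n) (R : ℝ), 0 < R →
    essSup u (volume.restrict (ball x R)) ≤
      ENNReal.ofReal C * ((volume (ball x R))⁻¹ * ∫⁻ y in ball x R, u y)

/-- Doubling condition for an `ℝ≥0∞`-valued weight. -/
def IsDoubling {n : ℕ} (u : Rn n → ℝ≥0∞) : Prop :=
  ∃ C : ℝ, 0 < C ∧ ∀ (x : Rn n) (R : ℝ), 0 < R →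
    ∫⁻ y in ball x (2 * R), u y ≤ ENNReal.ofReal C * ∫⁻ y in ball x R, u y

/-- The multilinear class `A_{p⃗,∞}`. -/
def ApInfty {n : ℕ} (m : ℕ) (p : Fin m → ℝ≥0∞) (v : Fin m → Rn n → ℝ≥0∞) : Prop :=
  ∃ C : ℝ, 0 < C ∧ ∀ (xB : Rn n) (R : ℝ), 0 < R →
    essSup (fun x => ∏ i, v i x) (volume.restrict (ball xB R)) *
        ∏ i, (volume (ball xB R) ^ (-(((conjE (p i))⁻¹).toReal)) *
          lpOn (conjE (p i)) (fun y => (v i y)⁻¹) (ball xB R))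
      ≤ ENNReal.ofReal C

/-- The kernel of the modified multilinear fractional operator `J_{γ,m}`. -/
def Jker {n : ℕ} (m : ℕ) (γ : ℝ) (x : Rn n) (y : Fin m → Rn n) : ℝ :=
  (∑ i, dist x (y i)) ^ (γ - (m : ℝ) * (n : ℝ)) -
    (if ∀ i, y i ∈ ball (0 : Rn n) 1 then 0
     else (∑ i, dist (0 : Rn n) (y i)) ^ (γ - (m : ℝ) * (n : ℝ)))

/-- The modified multilinear fractional operator `J_{γ,m}`. -/
def Jop {n m : ℕ} (γ : ℝ) (f : Fin m → Rn n → ℝ) (x : Rn n) : ℝ :=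
  ∫ y : Fin m → Rn n, Jker m γ x y * ∏ i, f i (y i)

/-- The vector `(1,…,1)` in `ℝⁿ`. -/
def uvec (n : ℕ) : Rn n := (EuclideanSpace.equiv (Fin n) ℝ).symm fun _ => 1

/-- The quadrant `A` associated to a ball with center `xB`. -/
def Aset {n : ℕ} (xB : Rn n) : Set (Rn n) := {y | ∀ i, xB i ≤ y i}

/-- The set `C₁` associated to a ball `B(xB,R)`. -/
def C1set {n : ℕ} (xB : Rn n) (R : ℝ) : Set (Rn n) :=
  ball (xB - (R / (12 * Real.sqrt n)) • uvec n) (R / (12 * Real.sqrt n)) ∩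
    {y | ∀ i, y i ≤ (xB - (R / (12 * Real.sqrt n)) • uvec n) i}

/-- The set `C₂` associated to a ball `B(xB,R)`. -/
def C2set {n : ℕ} (xB : Rn n) (R : ℝ) : Set (Rn n) :=
  ball (xB - (R / (3 * Real.sqrt n)) • uvec n) (2 * R / 3) ∩
    {y | ∀ i, y i ≤ (xB - (R / (3 * Real.sqrt n)) • uvec n) i}

/-- if `w = ∏ v_i` and `(w,v⃗) ∈ ℍ_m(p⃗,γ,δ)`, then `δ = γ - n/p`. -/
theorem statement5 {n m : ℕ} (hn : 1 ≤ n) (hm : 1 ≤ m) (γ : ℝ) (hγ0 : 0 < γ)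
    (hγ : γ < m * n) (γv : Fin m → ℝ) (hγv : ∀ i, 0 < γv i ∧ γv i < n)
    (hγsum : ∑ i, γv i = γ) (δ : ℝ) (p : Fin m → ℝ≥0∞) (hp : ∀ i, 1 ≤ p i)
    (v : Fin m → Rn n → ℝ≥0∞) (hv : ∀ i, IsWeight (v i))
    (hH : Hm m γv δ p (fun x => ∏ i, v i x) v) :
    δ = γ - n * ∑ i, ((p i)⁻¹).toReal := by
  classical
  have hn0 : (n:ℝ) ≠ 0 := Nat.cast_ne_zero.2 (by omega)
  have hm0 : (m:ℝ) ≠ 0 := Nat.cast_ne_zero.2 (by omega)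
  have hnontriv : Nontrivial (Rn n) := by
    refine Module.nontrivial_of_finrank_pos (R := ℝ) ?_
    rw [finrank_euclideanSpace_fin]; omega
  set b := (volume : Measure (Rn n)) (ball (0 : Rn n) 1) with hbdef
  have hb0 : b ≠ 0 := (measure_ball_pos _ _ one_pos).ne'
  have hbt : b ≠ ∞ := measure_ball_lt_top.ne
  set K := b ^ ((n:ℝ)⁻¹) + 1 with hKdef
  have hK0 : K ≠ 0 := by
    simp only [hKdef]
    exact fun h => one_ne_zero ((add_eq_zero.1 h).2)
  have hKt : K ≠ ∞ := by
    simp only [hKdef]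
    exact ENNReal.add_ne_top.2
      ⟨ENNReal.rpow_ne_top_of_nonneg (by positivity) hbt, ENNReal.one_ne_top⟩
  set q : Fin m → ℝ≥0∞ := fun i => conjE (p i) with hqdef
  set r : Fin m → ℝ := fun i => ((q i).toReal)⁻¹ with hrdef
  set β : Fin m → ℝ := fun i => (n:ℝ) - γv i + 1/(m:ℝ) with hβdef
  have hβpos : ∀ i, 0 < β i := by
    intro i
    have h1 := (hγv i).2
    have h2 : (0:ℝ) < 1/(m:ℝ) := by positivity
    simp only [hβdef]; linarith
  have hsbpos : 0 < ∑ i, β i := Finset.sum_pos (fun i _ => hβpos i) ⟨⟨0, by omega⟩, Finset.mem_univ _⟩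
  obtain ⟨C, hC, hCle⟩ := hH
  set e : ℝ := -((δ-1)/(n:ℝ)) + ∑ i, r i with hedef
  set c₀ := (K ^ (∑ i, β i))⁻¹ * b ^ e with hc₀def
  have hc₀0 : c₀ ≠ 0 := by
    simp only [hc₀def]
    exact mul_ne_zero (ENNReal.inv_ne_zero.2 (aux_rpow_ne_top hK0 hKt _))
      (aux_rpow_ne_zero hb0 hbt _)
  have hc₀t : c₀ ≠ ∞ := by
    simp only [hc₀def]
    exact ENNReal.mul_ne_top (ENNReal.inv_ne_top.2 (aux_rpow_ne_zero hK0 hKt _))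
      (aux_rpow_ne_top hb0 hbt _)
  set A : ℝ := (n:ℝ) * e - ∑ i, β i with hAdef
  have hq1 : ∀ i, q i = ∞ ∨ (q i ≠ ∞ ∧ 1 ≤ (q i).toReal) := fun i => conjE_cases (hp i)
  -- the key inequality from testing the Hm condition on balls centered at 0
  have key : ∀ R : ℝ, 0 < R → c₀ * ENNReal.ofReal R ^ A ≤ ENNReal.ofReal C := by
    intro R hR
    set μ := (volume : Measure (Rn n)).restrict (ball (0:Rn n) R) with hμdef
    set V := (volume : Measure (Rn n)) (ball (0:Rn n) R) with hVdef
    have hV0 : V ≠ 0 := (measure_ball_pos _ _ hR).ne'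
    have hVt : V ≠ ∞ := measure_ball_lt_top.ne
    have hVb : V = ENNReal.ofReal R ^ (n:ℝ) * b := by
      rw [hVdef, Measure.addHaar_ball _ _ hR.le, finrank_euclideanSpace_fin,
        ENNReal.ofReal_pow hR.le, ← ENNReal.rpow_natCast]
    have hofR0 : ENNReal.ofReal R ≠ 0 := (ENNReal.ofReal_pos.2 hR).ne'
    have hofRt : ENNReal.ofReal R ≠ ∞ := ENNReal.ofReal_ne_top
    set X := K * ENNReal.ofReal R with hXdef
    have hX0 : X ≠ 0 := mul_ne_zero hK0 hofR0
    have hXt : X ≠ ∞ := ENNReal.mul_ne_top hKt hofRt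
    -- Hölder lower bound
    have hhold := holder_lower μ hm v (fun i => (hv i).1.aemeasurable)
      (fun i => ae_restrict_of_ae (hv i).2.1) q hq1
      (by rw [Measure.restrict_apply_univ]; exact hV0)
      (by rw [Measure.restrict_apply_univ]; exact hVt)
    rw [Measure.restrict_apply_univ] at hhold
    -- kernel lower bound on the ball
    have hVn : V ^ ((n:ℝ)⁻¹) = b ^ ((n:ℝ)⁻¹) * ENNReal.ofReal R := by
      rw [hVb, ENNReal.mul_rpow_of_ne_top
        (ENNReal.rpow_ne_top_of_nonneg (by positivity) hofRt) hbt,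
        ← ENNReal.rpow_mul, mul_inv_cancel₀ hn0, ENNReal.rpow_one, mul_comm]
    have hker : ∀ y ∈ ball (0:Rn n) R,
        V ^ ((n:ℝ)⁻¹) + edist (0:Rn n) y ≤ X := by
      intro y hy
      have h1 : edist (0:Rn n) y ≤ ENNReal.ofReal R := by
        rw [edist_comm, edist_dist]
        exact ENNReal.ofReal_le_ofReal (le_of_lt (mem_ball.1 hy))
      rw [hVn, hXdef, hKdef, add_mul, one_mul]
      exact add_le_add le_rfl h1
    -- lower bound for each Hm factor
    have hfac : ∀ i, (X ^ β i)⁻¹ *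
        (if q i = ∞ then essSup (fun x => (v i x)⁻¹) μ
         else (∫⁻ x, ((v i x)⁻¹) ^ (q i).toReal ∂μ) ^ ((q i).toReal)⁻¹)
        ≤ HmFactor m (γv i) (q i) (v i) 0 R := by
      intro i
      have hexp : -((n:ℝ) - γv i + 1/(m:ℝ)) = -(β i) := by rw [hβdef]
      have hkerlb : ∀ y ∈ ball (0:Rn n) R,
          (X ^ β i)⁻¹ ≤
          (V ^ ((n:ℝ)⁻¹) + edist (0:Rn n) y) ^ (-((n:ℝ) - γv i + 1/(m:ℝ))) := by
        intro y hy
        rw [hexp, ENNReal.rpow_neg]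
        exact ENNReal.inv_le_inv.2 (ENNReal.rpow_le_rpow (hker y hy) (hβpos i).le)
      by_cases hqi : q i = ∞
      · rw [if_pos hqi]
        have hrw : HmFactor m (γv i) (q i) (v i) 0 R =
            essSup (fun y => (v i y)⁻¹ *
              (V ^ ((n:ℝ)⁻¹) + edist (0:Rn n) y) ^ (-((n:ℝ) - γv i + 1/(m:ℝ))))
              (volume : Measure (Rn n)) := by
          rw [HmFactor, lpOn, if_pos hqi, Measure.restrict_univ]
        rw [hrw]
        calc (X ^ β i)⁻¹ * essSup (fun x => (v i x)⁻¹) μ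
            = essSup (fun x => (X ^ β i)⁻¹ * (v i x)⁻¹) μ := ENNReal.essSup_const_mul.symm
          _ ≤ essSup (fun y => (v i y)⁻¹ *
              (V ^ ((n:ℝ)⁻¹) + edist (0:Rn n) y) ^ (-((n:ℝ) - γv i + 1/(m:ℝ)))) μ := by
              refine essSup_mono_ae ?_
              filter_upwards [ae_restrict_mem measurableSet_ball] with y hy
              rw [mul_comm]
              exact mul_le_mul_right (hkerlb y hy) _
          _ ≤ _ := essSup_mono_measure (Measure.absolutelyContinuous_of_le
                Measure.restrict_le_self)
      · rw [if_neg hqi]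
        rcases hq1 i with h' | ⟨_, ht1⟩
        · exact absurd h' hqi
        have ht0 : (0:ℝ) < (q i).toReal := by linarith
        have hrw : HmFactor m (γv i) (q i) (v i) 0 R =
            (∫⁻ y, ((v i y)⁻¹ *
              (V ^ ((n:ℝ)⁻¹) + edist (0:Rn n) y) ^ (-((n:ℝ) - γv i + 1/(m:ℝ))))
                ^ (q i).toReal ∂(volume : Measure (Rn n))) ^ (1/(q i).toReal) := by
          rw [HmFactor, lpOn, if_neg hqi, Measure.restrict_univ]
        rw [hrw]
        have hstep : (X ^ β i)⁻¹ ^ (q i).toReal * ∫⁻ x, ((v i x)⁻¹) ^ (q i).toReal ∂μ ≤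
            ∫⁻ y, ((v i y)⁻¹ *
              (V ^ ((n:ℝ)⁻¹) + edist (0:Rn n) y) ^ (-((n:ℝ) - γv i + 1/(m:ℝ))))
                ^ (q i).toReal ∂(volume : Measure (Rn n)) := by
          rw [← lintegral_const_mul' _ _ (aux_rpow_ne_top
            (ENNReal.inv_ne_zero.2 (aux_rpow_ne_top hX0 hXt _))
            (ENNReal.inv_ne_top.2 (aux_rpow_ne_zero hX0 hXt _)) _)]
          refine le_trans (lintegral_mono_ae ?_) (setLIntegral_le_lintegral _ _)
          filter_upwards [ae_restrict_mem measurableSet_ball] with y hy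
          rw [← ENNReal.mul_rpow_of_nonneg _ _ ht0.le]
          refine ENNReal.rpow_le_rpow ?_ ht0.le
          rw [mul_comm]
          exact mul_le_mul_right (hkerlb y hy) _
        calc (X ^ β i)⁻¹ * (∫⁻ x, ((v i x)⁻¹) ^ (q i).toReal ∂μ) ^ ((q i).toReal)⁻¹
            = ((X ^ β i)⁻¹ ^ (q i).toReal * ∫⁻ x, ((v i x)⁻¹) ^ (q i).toReal ∂μ)
                ^ (1/(q i).toReal) := by
              rw [ENNReal.mul_rpow_of_nonneg _ _ (by positivity : (0:ℝ) ≤ 1/(q i).toReal),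
                ← ENNReal.rpow_mul, one_div, mul_inv_cancel₀ ht0.ne', ENNReal.rpow_one]
          _ ≤ _ := ENNReal.rpow_le_rpow hstep (by positivity)
    -- assemble
    have hprod : (X ^ (∑ i, β i))⁻¹ *
        ∏ i, (if q i = ∞ then essSup (fun x => (v i x)⁻¹) μ
         else (∫⁻ x, ((v i x)⁻¹) ^ (q i).toReal ∂μ) ^ ((q i).toReal)⁻¹)
        ≤ ∏ i, HmFactor m (γv i) (q i) (v i) 0 R := by
      have : (X ^ (∑ i, β i))⁻¹ = ∏ i, (X ^ β i)⁻¹ := by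
        simp_rw [← ENNReal.rpow_neg]
        rw [← aux_rpow_sum hX0 hXt]
        congr 1
        exact (Finset.sum_neg_distrib ..).symm
      rw [this, ← Finset.prod_mul_distrib]
      exact Finset.prod_le_prod' fun i _ => hfac i
    have hineq := hCle 0 R hR
    have hchain : (X ^ (∑ i, β i))⁻¹ * (V ^ (-((δ-1)/(n:ℝ))) * V ^ (∑ i, r i))
        ≤ ENNReal.ofReal C := by
      refine le_trans ?_ hineq
      calc (X ^ (∑ i, β i))⁻¹ * (V ^ (-((δ-1)/(n:ℝ))) * V ^ (∑ i, r i))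
          ≤ (X ^ (∑ i, β i))⁻¹ * (V ^ (-((δ-1)/(n:ℝ))) *
              (essSup (fun x => ∏ i, v i x) μ *
              ∏ i, (if q i = ∞ then essSup (fun x => (v i x)⁻¹) μ
               else (∫⁻ x, ((v i x)⁻¹) ^ (q i).toReal ∂μ) ^ ((q i).toReal)⁻¹))) := by
            exact mul_le_mul_right (mul_le_mul_right hhold _) _
        _ = essSup (fun x => ∏ i, v i x) μ * V ^ (-((δ-1)/(n:ℝ))) *
              ((X ^ (∑ i, β i))⁻¹ *
              ∏ i, (if q i = ∞ then essSup (fun x => (v i x)⁻¹) μ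
               else (∫⁻ x, ((v i x)⁻¹) ^ (q i).toReal ∂μ) ^ ((q i).toReal)⁻¹)) := by
            ring
        _ ≤ essSup (fun x => ∏ i, v i x) μ * V ^ (-((δ-1)/(n:ℝ))) *
              ∏ i, HmFactor m (γv i) (q i) (v i) 0 R := mul_le_mul_right hprod _
    -- rewrite the left side as c₀ * (ofReal R) ^ A
    have heq : (X ^ (∑ i, β i))⁻¹ * (V ^ (-((δ-1)/(n:ℝ))) * V ^ (∑ i, r i))
        = c₀ * ENNReal.ofReal R ^ A := by
      rw [← ENNReal.rpow_add _ _ hV0 hVt, ← hedef]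
      rw [hVb, ENNReal.mul_rpow_of_ne_top
        (ENNReal.rpow_ne_top_of_nonneg (by positivity) hofRt) hbt,
        ← ENNReal.rpow_mul]
      rw [hXdef, ENNReal.mul_rpow_of_ne_top hKt hofRt,
        ENNReal.mul_inv (Or.inl (aux_rpow_ne_zero hK0 hKt _))
          (Or.inl (aux_rpow_ne_top hK0 hKt _))]
      rw [hc₀def]
      have : ((ENNReal.ofReal R) ^ (∑ i, β i))⁻¹ = (ENNReal.ofReal R) ^ (-(∑ i, β i)) :=
        (ENNReal.rpow_neg _ _).symm
      rw [this]
      have : (ENNReal.ofReal R) ^ (-(∑ i, β i)) * (ENNReal.ofReal R) ^ ((n:ℝ) * e) =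
          (ENNReal.ofReal R) ^ A := by
        rw [← ENNReal.rpow_add _ _ hofR0 hofRt, hAdef]
        congr 1
        ring
      calc (K ^ (∑ i, β i))⁻¹ * (ENNReal.ofReal R) ^ (-(∑ i, β i)) *
            ((ENNReal.ofReal R) ^ ((n:ℝ) * e) * b ^ e)
          = (K ^ (∑ i, β i))⁻¹ * b ^ e *
            ((ENNReal.ofReal R) ^ (-(∑ i, β i)) * (ENNReal.ofReal R) ^ ((n:ℝ) * e)) := by
            ring
        _ = (K ^ (∑ i, β i))⁻¹ * b ^ e * (ENNReal.ofReal R) ^ A := by rw [this]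
    rw [← heq]
    exact hchain
  -- conclude that the exponent A vanishes
  have hA0 : A = 0 := by
    by_contra hA
    have hall : ∀ T : ℝ, 0 < T → c₀ * ENNReal.ofReal T ≤ ENNReal.ofReal C := by
      intro T hT
      have hRpos : (0:ℝ) < T ^ (A⁻¹) := Real.rpow_pos_of_pos hT _
      have h := key _ hRpos
      rwa [ENNReal.ofReal_rpow_of_pos hRpos, ← Real.rpow_mul hT.le,
        inv_mul_cancel₀ hA, Real.rpow_one] at h
    have h1 : 0 < c₀.toReal := ENNReal.toReal_pos hc₀0 hc₀t
    have hT : 0 < (C+1)/c₀.toReal := div_pos (by linarith) h1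
    have h2 := hall _ hT
    have h3 : ENNReal.ofReal (C+1) ≤ ENNReal.ofReal C := by
      calc ENNReal.ofReal (C+1) = ENNReal.ofReal (c₀.toReal * ((C+1)/c₀.toReal)) := by
            rw [mul_div_cancel₀ _ h1.ne']
        _ = c₀ * ENNReal.ofReal ((C+1)/c₀.toReal) := by
            rw [ENNReal.ofReal_mul h1.le, ENNReal.ofReal_toReal hc₀t]
        _ ≤ ENNReal.ofReal C := h2
    have := (ENNReal.ofReal_le_ofReal_iff hC.le).1 h3
    linarith
  -- final arithmetic
  have hsb : ∑ i, β i = (m:ℝ)*(n:ℝ) - γ + 1 := by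
    simp only [hβdef]
    rw [Finset.sum_add_distrib, Finset.sum_sub_distrib, Finset.sum_const,
      Finset.sum_const, Finset.card_univ, Fintype.card_fin, hγsum]
    rw [nsmul_eq_mul, nsmul_eq_mul]
    field_simp
  have hsr : ∑ i, r i = (m:ℝ) - ∑ i, ((p i)⁻¹).toReal := by
    have hri : ∀ i, r i = 1 - ((p i)⁻¹).toReal := by
      intro i
      rw [hrdef]
      exact conjE_inv_toReal (hp i)
    rw [Finset.sum_congr rfl (fun i _ => hri i), Finset.sum_sub_distrib,
      Finset.sum_const, Finset.card_univ, Fintype.card_fin, nsmul_eq_mul, mul_one]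
  rw [hAdef, hedef, hsb, hsr] at hA0
  rw [mul_add, mul_neg, mul_div_cancel₀ _ hn0, mul_sub] at hA0
  linarith
end
end

section
/- Let 0 < γ < mn, δ ∈ ℝ, p⃗ a vector of exponents, and (w,v⃗) a pair of weights such that v_i^{-1} ∈ RH_∞ for every i ∈ I_1 and v_i^{-p_i'} is doubling for every i ∈ I_2. Then (w,v⃗) ∈ ℍ_m(p⃗,γ,δ) if and only if (w,v⃗) satisfies the global condition. -/
open MeasureTheory Metric Set
open scoped ENNReal NNReal BigOperators Classical

noncomputable section

namespace S6

open ENNReal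

variable {n : ℕ}

/-- The volume of the unit ball. -/
noncomputable def ub (n : ℕ) : ℝ≥0∞ := volume (ball (0 : Rn n) 1)

lemma ub_pos (n : ℕ) : 0 < ub n := measure_ball_pos _ _ one_pos

lemma ub_ne_top (n : ℕ) : ub n ≠ ⊤ := measure_ball_lt_top.ne

/-- `ub n` to the power `1/n`. -/
noncomputable def rub (n : ℕ) : ℝ≥0∞ := ub n ^ ((n : ℝ)⁻¹)

lemma rub_pos (n : ℕ) : 0 < rub n := ENNReal.rpow_pos (ub_pos n) (ub_ne_top n)

lemma rub_ne_top (n : ℕ) : rub n ≠ ⊤ :=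
  ENNReal.rpow_ne_top_of_nonneg (by positivity) (ub_ne_top n)

lemma nontrivialRn (hn : 1 ≤ n) : Nontrivial (Rn n) := by
  refine ⟨⟨EuclideanSpace.single (⟨0, hn⟩ : Fin n) (1 : ℝ), 0, fun h => ?_⟩⟩
  have h1 : ‖(EuclideanSpace.single (⟨0, hn⟩ : Fin n) (1 : ℝ) : Rn n)‖ = 1 := by
    rw [EuclideanSpace.norm_single]; norm_num
  rw [h, norm_zero] at h1; norm_num at h1

lemma volume_ball_eq (hn : 1 ≤ n) (x : Rn n) {R : ℝ} (hR : 0 < R) :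
    volume (ball x R) = ENNReal.ofReal (R ^ n) * ub n := by
  haveI := nontrivialRn hn
  simpa [ub, finrank_euclideanSpace_fin] using
    MeasureTheory.Measure.addHaar_ball (volume : Measure (Rn n)) x hR.le

lemma cB_eq (hn : 1 ≤ n) (x : Rn n) {R : ℝ} (hR : 0 < R) :
    volume (ball x R) ^ ((n : ℝ)⁻¹) = ENNReal.ofReal R * rub n := by
  rw [volume_ball_eq hn x hR, ENNReal.mul_rpow_of_nonneg _ _ (by positivity)]
  congr 1
  rw [ENNReal.ofReal_rpow_of_pos (by positivity)]
  congr 1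
  rw [← Real.rpow_natCast R n, ← Real.rpow_mul hR.le,
    mul_inv_cancel₀ (by exact_mod_cast (by omega : n ≠ 0) : (n : ℝ) ≠ 0), Real.rpow_one]

lemma rpow_neg_le_rpow_neg {x y : ℝ≥0∞} {e : ℝ} (he : 0 ≤ e) (h : x ≤ y) :
    y ^ (-e) ≤ x ^ (-e) := by
  rw [ENNReal.rpow_neg, ENNReal.rpow_neg]
  exact ENNReal.inv_le_inv' (ENNReal.rpow_le_rpow h he)

lemma rpow_pos' {x : ℝ≥0∞} (hx : 0 < x) {e : ℝ} (he : 0 < e) : 0 < x ^ e := by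
  rcases eq_or_ne x ⊤ with rfl | hxt
  · rw [ENNReal.top_rpow_of_pos he]; simp
  · exact ENNReal.rpow_pos hx hxt

lemma rpow_neg_pos {d : ℝ≥0∞} (hd : d ≠ ⊤) {e : ℝ} (he : 0 < e) : 0 < d ^ (-e) := by
  rcases eq_or_ne d 0 with rfl | h0
  · rw [ENNReal.zero_rpow_of_neg (by linarith)]; simp
  · exact ENNReal.rpow_pos (pos_iff_ne_zero.mpr h0) hd

lemma self_inv_rpow {d : ℝ≥0∞} (h0 : d ≠ 0) (ht : d ≠ ⊤) (e : ℝ) :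
    d ^ e * d ^ (-e) = 1 := by
  rw [← ENNReal.rpow_add e (-e) h0 ht]; norm_num

lemma le_rpow_mul {u d : ℝ≥0∞} {r2 e : ℝ} (h0 : d ≠ 0) (ht : d ≠ ⊤)
    (hd2 : d ≤ ENNReal.ofReal r2) (he : 0 ≤ e) :
    u ≤ ENNReal.ofReal r2 ^ e * (u * d ^ (-e)) := by
  have h1 : d ^ e * (u * d ^ (-e)) = u := by
    calc d ^ e * (u * d ^ (-e)) = u * (d ^ e * d ^ (-e)) := by ring
      _ = u := by rw [self_inv_rpow h0 ht, mul_one]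
  calc u = d ^ e * (u * d ^ (-e)) := h1.symm
    _ ≤ ENNReal.ofReal r2 ^ e * (u * d ^ (-e)) :=
        mul_le_mul_left (ENNReal.rpow_le_rpow hd2 he) _

lemma essSup_pos_of_pos {α : Type*} [MeasurableSpace α] {μ : MeasureTheory.Measure α}
    {f : α → ℝ≥0∞} (hμ : μ ≠ 0) (hf : ∀ᵐ x ∂μ, 0 < f x) : 0 < essSup f μ := by
  rw [pos_iff_ne_zero]
  intro h
  have h0 : f =ᵐ[μ] 0 := ENNReal.essSup_eq_zero_iff.mp h
  have hFalse : ∀ᵐ x ∂μ, False := by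
    filter_upwards [hf, h0] with x h1 h2
    rw [Pi.zero_apply] at h2
    exact absurd h2 h1.ne'
  rw [Filter.eventually_false_iff_eq_bot, MeasureTheory.ae_eq_bot] at hFalse
  exact hμ hFalse

lemma essSup_mono_set {α : Type*} [MeasurableSpace α] {μ : MeasureTheory.Measure α}
    {f : α → ℝ≥0∞} {s t : Set α} (h : s ⊆ t) :
    essSup f (μ.restrict s) ≤ essSup f (μ.restrict t) :=
  essSup_mono_measure (Measure.absolutelyContinuous_of_le (Measure.restrict_mono h le_rfl))

lemma setLIntegral_le_essSup {α : Type*} [MeasurableSpace α] (μ : MeasureTheory.Measure α)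
    (f : α → ℝ≥0∞) (s : Set α) :
    ∫⁻ y in s, f y ∂μ ≤ essSup f (μ.restrict s) * μ s := by
  calc ∫⁻ y in s, f y ∂μ ≤ ∫⁻ _ in s, essSup f (μ.restrict s) ∂μ :=
        lintegral_mono_ae (ENNReal.ae_le_essSup f)
    _ = essSup f (μ.restrict s) * μ s := by rw [setLIntegral_const]

/-- Pointwise comparison of the two kernels outside the ball. -/
lemma dir1_ptwise (hn : 1 ≤ n) (xB : Rn n) {R : ℝ} (hR : 0 < R) {α : ℝ} (hα : 0 ≤ α)
    (u : ℝ≥0∞) {y : Rn n} (hy : y ∈ (ball xB R)ᶜ) :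
    u * edist xB y ^ (-α) ≤ (rub n + 1) ^ α *
      (u * (volume (ball xB R) ^ ((n : ℝ)⁻¹) + edist xB y) ^ (-α)) := by
  set d := edist xB y with hd
  have hdt : d ≠ ⊤ := edist_ne_top _ _
  have hdR : ENNReal.ofReal R ≤ d := by
    rw [hd, edist_dist]
    apply ENNReal.ofReal_le_ofReal
    rw [dist_comm]
    exact not_lt.mp (by simpa [mem_ball] using hy)
  have hK0 : (rub n + 1 : ℝ≥0∞) ≠ 0 := by simp
  have hKt : (rub n + 1 : ℝ≥0∞) ≠ ⊤ := by
    simp [ENNReal.add_eq_top, rub_ne_top n]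
  have hsum : volume (ball xB R) ^ ((n : ℝ)⁻¹) + d ≤ d * (rub n + 1) := by
    rw [cB_eq hn xB hR, mul_add, mul_one]
    exact add_le_add_left (mul_le_mul_left hdR _) d
  have h1 : (d * (rub n + 1)) ^ (-α) ≤ (volume (ball xB R) ^ ((n : ℝ)⁻¹) + d) ^ (-α) :=
    rpow_neg_le_rpow_neg hα hsum
  have h2 : (d * (rub n + 1)) ^ (-α) = d ^ (-α) * (rub n + 1) ^ (-α) :=
    ENNReal.mul_rpow_of_ne_top hdt hKt _
  have key : (rub n + 1) ^ α * (u * ((d * (rub n + 1)) ^ (-α))) = u * d ^ (-α) := by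
    rw [h2]
    calc (rub n + 1) ^ α * (u * (d ^ (-α) * (rub n + 1) ^ (-α)))
        = (rub n + 1) ^ α * (rub n + 1) ^ (-α) * (u * d ^ (-α)) := by ring
      _ = u * d ^ (-α) := by rw [self_inv_rpow hK0 hKt, one_mul]
  calc u * d ^ (-α) = (rub n + 1) ^ α * (u * ((d * (rub n + 1)) ^ (-α))) := key.symm
    _ ≤ (rub n + 1) ^ α *
        (u * (volume (ball xB R) ^ ((n : ℝ)⁻¹) + d) ^ (-α)) :=
      mul_le_mul_right (mul_le_mul_right h1 u) _

/-- Direction 1, factor-wise: the global factor is controlled by the `Hm` factor. -/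
lemma dir1_factor (hn : 1 ≤ n) (u : Rn n → ℝ≥0∞) {α : ℝ} (hα : 0 ≤ α) (q : ℝ≥0∞)
    (hq : q = ⊤ ∨ 0 < q.toReal) (xB : Rn n) {R : ℝ} (hR : 0 < R) :
    lpOn q (fun y => u y * edist xB y ^ (-α)) (ball xB R)ᶜ ≤
      (rub n + 1) ^ α *
        lpOn q (fun y => u y * (volume (ball xB R) ^ ((n : ℝ)⁻¹) + edist xB y) ^ (-α))
          Set.univ := by
  rcases hq with rfl | hq
  · rw [lpOn, lpOn, if_pos rfl, if_pos rfl, Measure.restrict_univ]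
    calc essSup (fun y => u y * edist xB y ^ (-α)) (volume.restrict (ball xB R)ᶜ)
        ≤ essSup (fun y => (rub n + 1) ^ α *
            (u y * (volume (ball xB R) ^ ((n : ℝ)⁻¹) + edist xB y) ^ (-α)))
            (volume.restrict (ball xB R)ᶜ) := by
          exact essSup_mono_ae ((ae_restrict_iff' measurableSet_ball.compl).mpr
            (Filter.Eventually.of_forall fun y hy => dir1_ptwise hn xB hR hα (u y) hy))
      _ ≤ essSup (fun y => (rub n + 1) ^ α *
            (u y * (volume (ball xB R) ^ ((n : ℝ)⁻¹) + edist xB y) ^ (-α))) volume :=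
          essSup_mono_measure' Measure.restrict_le_self
      _ = (rub n + 1) ^ α * essSup
            (fun y => u y * (volume (ball xB R) ^ ((n : ℝ)⁻¹) + edist xB y) ^ (-α)) volume :=
          ENNReal.essSup_const_mul
  · have hqt : q ≠ ⊤ := fun h => by rw [h] at hq; simp at hq
    rw [lpOn, lpOn, if_neg hqt, if_neg hqt, setLIntegral_univ]
    have hKt : ((rub n + 1 : ℝ≥0∞)) ^ α ≠ ⊤ := by
      apply ENNReal.rpow_ne_top_of_nonneg hα
      simp [ENNReal.add_eq_top, rub_ne_top n]
    calc (∫⁻ y in (ball xB R)ᶜ, (u y * edist xB y ^ (-α)) ^ q.toReal) ^ (1 / q.toReal)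
        ≤ (∫⁻ y in (ball xB R)ᶜ, ((rub n + 1) ^ α) ^ q.toReal *
            ((u y * (volume (ball xB R) ^ ((n : ℝ)⁻¹) + edist xB y) ^ (-α)) ^ q.toReal)) ^
              (1 / q.toReal) := by
          apply ENNReal.rpow_le_rpow _ (by positivity)
          apply lintegral_mono_ae
          rw [ae_restrict_iff' measurableSet_ball.compl]
          apply Filter.Eventually.of_forall
          intro y hy
          rw [← ENNReal.mul_rpow_of_nonneg _ _ hq.le]
          exact ENNReal.rpow_le_rpow (dir1_ptwise hn xB hR hα (u y) hy) hq.le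
      _ ≤ (∫⁻ y, ((rub n + 1) ^ α) ^ q.toReal *
            ((u y * (volume (ball xB R) ^ ((n : ℝ)⁻¹) + edist xB y) ^ (-α)) ^ q.toReal)) ^
              (1 / q.toReal) :=
          ENNReal.rpow_le_rpow (setLIntegral_le_lintegral _ _) (by positivity)
      _ = (rub n + 1) ^ α *
            (∫⁻ y, (u y * (volume (ball xB R) ^ ((n : ℝ)⁻¹) + edist xB y) ^ (-α)) ^ q.toReal) ^
              (1 / q.toReal) := by
          rw [lintegral_const_mul' _ _ (ENNReal.rpow_ne_top_of_nonneg hq.le hKt),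
            ENNReal.mul_rpow_of_nonneg _ _ (by positivity), ← ENNReal.rpow_mul,
            ← ENNReal.rpow_mul, mul_one_div, div_self hq.ne', mul_one]

lemma dist_center (x : Rn n) {c : ℝ} (e : Rn n) (he : ‖e‖ = 1) (hc : 0 ≤ c) :
    dist x (x + c • e) = c := by
  rw [dist_self_add_right, norm_smul, he, mul_one, Real.norm_eq_abs, abs_of_nonneg hc]

/-- Direction 2, factor-wise, integral case (`i ∈ I₂`), using doubling. -/
lemma dir2_factor_int (hn : 1 ≤ n) {u : Rn n → ℝ≥0∞} {α : ℝ} (hα : 0 < α)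
    {qr : ℝ} (hqr : 0 < qr) {C₀ : ℝ} (hC₀ : 0 < C₀)
    (hdbl : ∀ (x : Rn n) (R : ℝ), 0 < R →
      ∫⁻ y in ball x (2 * R), u y ^ qr ≤ ENNReal.ofReal C₀ * ∫⁻ y in ball x R, u y ^ qr)
    (e : Rn n) (he : ‖e‖ = 1) (xB : Rn n) {R : ℝ} (hR : 0 < R) :
    (∫⁻ y, (u y * (volume (ball xB R) ^ ((n : ℝ)⁻¹) + edist xB y) ^ (-α)) ^ qr) ^ (1 / qr) ≤
      (rub n ^ (-(α * qr)) * ENNReal.ofReal C₀ ^ 3 * ENNReal.ofReal 2 ^ (α * qr) + 1) ^ (1 / qr) *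
        (∫⁻ y in (ball xB R)ᶜ, (u y * edist xB y ^ (-α)) ^ qr) ^ (1 / qr) := by
  set c := volume (ball xB R) ^ ((n : ℝ)⁻¹) with hc
  set J := ∫⁻ y in (ball xB R)ᶜ, (u y * edist xB y ^ (-α)) ^ qr with hJ
  set D₁ := rub n ^ (-(α * qr)) * ENNReal.ofReal C₀ ^ 3 * ENNReal.ofReal 2 ^ (α * qr) with hD₁
  set z := xB + (3 * R / 2) • e with hz
  have hxz : dist xB z = 3 * R / 2 := dist_center xB e he (by linarith)
  have hzball : ball z (R / 2) ⊆ (ball xB R)ᶜ := by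
    intro y hy
    have h1 : dist y z < R / 2 := mem_ball.mp hy
    have h2 : dist xB z ≤ dist xB y + dist y z := dist_triangle xB y z
    simp only [mem_compl_iff, mem_ball, not_lt]
    rw [dist_comm y xB]
    linarith
  have hzdist : ∀ y ∈ ball z (R / 2),
      edist xB y ≤ ENNReal.ofReal (2 * R) ∧ edist xB y ≠ 0 := by
    intro y hy
    have h1 : dist y z < R / 2 := mem_ball.mp hy
    have h2 : dist xB y ≤ dist xB z + dist z y := dist_triangle xB z y
    have h3 : dist xB z ≤ dist xB y + dist y z := dist_triangle xB y z
    rw [dist_comm z y] at h2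
    constructor
    · rw [edist_dist]; exact ENNReal.ofReal_le_ofReal (by linarith)
    · rw [edist_dist]
      exact (ENNReal.ofReal_pos.mpr (by linarith)).ne'
  have hd1 := hdbl z (2 * R) (by linarith)
  have hd2 := hdbl z R hR
  have hd3 := hdbl z (R / 2) (by linarith)
  rw [show (2 : ℝ) * (2 * R) = 4 * R by ring] at hd1
  rw [show (2 : ℝ) * (R / 2) = R by ring] at hd3
  have hBz : ball xB R ⊆ ball z (4 * R) := by
    intro y hy
    rw [mem_ball] at hy ⊢
    have h1 : dist y z ≤ dist y xB + dist xB z := dist_triangle y xB z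
    linarith
  have hchain : ∫⁻ y in ball xB R, u y ^ qr ≤
      ENNReal.ofReal C₀ ^ 3 * ∫⁻ y in ball z (R / 2), u y ^ qr := by
    calc ∫⁻ y in ball xB R, u y ^ qr ≤ ∫⁻ y in ball z (4 * R), u y ^ qr :=
          lintegral_mono_set hBz
      _ ≤ ENNReal.ofReal C₀ * ∫⁻ y in ball z (2 * R), u y ^ qr := hd1
      _ ≤ ENNReal.ofReal C₀ * (ENNReal.ofReal C₀ * ∫⁻ y in ball z R, u y ^ qr) :=
          mul_le_mul_right hd2 _
      _ ≤ ENNReal.ofReal C₀ * (ENNReal.ofReal C₀ *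
            (ENNReal.ofReal C₀ * ∫⁻ y in ball z (R / 2), u y ^ qr)) :=
          mul_le_mul_right (mul_le_mul_right hd3 _) _
      _ = ENNReal.ofReal C₀ ^ 3 * ∫⁻ y in ball z (R / 2), u y ^ qr := by ring
  have hsmall : ∫⁻ y in ball z (R / 2), u y ^ qr ≤ ENNReal.ofReal (2 * R) ^ (α * qr) * J := by
    calc ∫⁻ y in ball z (R / 2), u y ^ qr
        ≤ ∫⁻ y in ball z (R / 2),
            ENNReal.ofReal (2 * R) ^ (α * qr) * (u y * edist xB y ^ (-α)) ^ qr := by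
          apply lintegral_mono_ae
          refine (ae_restrict_iff' measurableSet_ball).mpr
            (Filter.Eventually.of_forall fun y hy => ?_)
          obtain ⟨hle, hne⟩ := hzdist y hy
          have hpt : u y ≤ ENNReal.ofReal (2 * R) ^ α * (u y * edist xB y ^ (-α)) :=
            le_rpow_mul hne (edist_ne_top _ _) hle hα.le
          calc u y ^ qr
              ≤ (ENNReal.ofReal (2 * R) ^ α * (u y * edist xB y ^ (-α))) ^ qr :=
                ENNReal.rpow_le_rpow hpt hqr.le
            _ = ENNReal.ofReal (2 * R) ^ (α * qr) * (u y * edist xB y ^ (-α)) ^ qr := by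
                rw [ENNReal.mul_rpow_of_nonneg _ _ hqr.le, ← ENNReal.rpow_mul]
      _ = ENNReal.ofReal (2 * R) ^ (α * qr) *
            ∫⁻ y in ball z (R / 2), (u y * edist xB y ^ (-α)) ^ qr :=
          lintegral_const_mul' _ _
            (ENNReal.rpow_ne_top_of_nonneg (by positivity) ENNReal.ofReal_ne_top)
      _ ≤ ENNReal.ofReal (2 * R) ^ (α * qr) * J :=
          mul_le_mul_right (lintegral_mono_set hzball) _
  have hc0 : c ≠ 0 := by
    rw [hc, cB_eq hn xB hR]
    exact mul_ne_zero (ENNReal.ofReal_pos.mpr hR).ne' (rub_pos n).ne'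
  have hct : c ≠ ⊤ := by
    rw [hc, cB_eq hn xB hR]
    exact ENNReal.mul_ne_top ENNReal.ofReal_ne_top (rub_ne_top n)
  have hcne : c ^ (-(α * qr)) ≠ ⊤ := by
    rw [ENNReal.rpow_neg]
    exact ENNReal.inv_ne_top.mpr (ENNReal.rpow_pos (pos_iff_ne_zero.mpr hc0) hct).ne'
  have hcc : c ^ (-(α * qr)) * ENNReal.ofReal (2 * R) ^ (α * qr) =
      rub n ^ (-(α * qr)) * ENNReal.ofReal 2 ^ (α * qr) := by
    rw [hc, cB_eq hn xB hR,
      ENNReal.mul_rpow_of_ne_top ENNReal.ofReal_ne_top (rub_ne_top n),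
      ENNReal.ofReal_mul (by norm_num : (0:ℝ) ≤ 2),
      ENNReal.mul_rpow_of_ne_top ENNReal.ofReal_ne_top ENNReal.ofReal_ne_top]
    calc ENNReal.ofReal R ^ (-(α * qr)) * rub n ^ (-(α * qr)) *
          (ENNReal.ofReal 2 ^ (α * qr) * ENNReal.ofReal R ^ (α * qr))
        = ENNReal.ofReal R ^ (α * qr) * ENNReal.ofReal R ^ (-(α * qr)) *
            (rub n ^ (-(α * qr)) * ENNReal.ofReal 2 ^ (α * qr)) := by ring
      _ = rub n ^ (-(α * qr)) * ENNReal.ofReal 2 ^ (α * qr) := by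
          rw [self_inv_rpow (ENNReal.ofReal_pos.mpr hR).ne' ENNReal.ofReal_ne_top, one_mul]
  have hBpart : ∫⁻ y in ball xB R, (u y * (c + edist xB y) ^ (-α)) ^ qr ≤ D₁ * J := by
    have hker : ∀ y : Rn n, (u y * (c + edist xB y) ^ (-α)) ^ qr ≤
        c ^ (-(α * qr)) * u y ^ qr := by
      intro y
      calc (u y * (c + edist xB y) ^ (-α)) ^ qr
          ≤ (u y * c ^ (-α)) ^ qr :=
            ENNReal.rpow_le_rpow
              (mul_le_mul_right (rpow_neg_le_rpow_neg hα.le le_self_add) _) hqr.le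
        _ = c ^ (-(α * qr)) * u y ^ qr := by
            rw [ENNReal.mul_rpow_of_nonneg _ _ hqr.le, ← ENNReal.rpow_mul, neg_mul, mul_comm]
    calc ∫⁻ y in ball xB R, (u y * (c + edist xB y) ^ (-α)) ^ qr
        ≤ ∫⁻ y in ball xB R, c ^ (-(α * qr)) * u y ^ qr := lintegral_mono fun y => hker y
      _ = c ^ (-(α * qr)) * ∫⁻ y in ball xB R, u y ^ qr := lintegral_const_mul' _ _ hcne
      _ ≤ c ^ (-(α * qr)) *
            (ENNReal.ofReal C₀ ^ 3 * (ENNReal.ofReal (2 * R) ^ (α * qr) * J)) :=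
          mul_le_mul_right (hchain.trans (mul_le_mul_right hsmall _)) _
      _ = (c ^ (-(α * qr)) * ENNReal.ofReal (2 * R) ^ (α * qr)) *
            (ENNReal.ofReal C₀ ^ 3 * J) := by ring
      _ = (rub n ^ (-(α * qr)) * ENNReal.ofReal 2 ^ (α * qr)) *
            (ENNReal.ofReal C₀ ^ 3 * J) := by rw [hcc]
      _ = D₁ * J := by rw [hD₁]; ring
  have hcomp : ∫⁻ y in (ball xB R)ᶜ, (u y * (c + edist xB y) ^ (-α)) ^ qr ≤ J := by
    rw [hJ]
    apply lintegral_mono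
    intro y
    exact ENNReal.rpow_le_rpow
      (mul_le_mul_right (rpow_neg_le_rpow_neg hα.le le_add_self) _) hqr.le
  have htot : ∫⁻ y, (u y * (c + edist xB y) ^ (-α)) ^ qr ≤ (D₁ + 1) * J := by
    rw [← lintegral_add_compl (fun y => (u y * (c + edist xB y) ^ (-α)) ^ qr)
      (measurableSet_ball (x := xB) (ε := R))]
    calc (∫⁻ y in ball xB R, (u y * (c + edist xB y) ^ (-α)) ^ qr) +
          ∫⁻ y in (ball xB R)ᶜ, (u y * (c + edist xB y) ^ (-α)) ^ qr
        ≤ D₁ * J + J := add_le_add hBpart hcomp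
      _ = (D₁ + 1) * J := by rw [add_mul, one_mul]
  calc (∫⁻ y, (u y * (c + edist xB y) ^ (-α)) ^ qr) ^ (1 / qr)
      ≤ ((D₁ + 1) * J) ^ (1 / qr) := ENNReal.rpow_le_rpow htot (by positivity)
    _ = (D₁ + 1) ^ (1 / qr) * J ^ (1 / qr) := ENNReal.mul_rpow_of_nonneg _ _ (by positivity)

/-- Direction 2, factor-wise, essential-supremum case (`i ∈ I₁`), using `RH_∞`. -/
lemma dir2_factor_inf (hn : 1 ≤ n) {u : Rn n → ℝ≥0∞} {α : ℝ} (hα : 0 < α)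
    {C₀ : ℝ} (hC₀ : 0 < C₀)
    (hRH : ∀ (x : Rn n) (R : ℝ), 0 < R → essSup u (volume.restrict (ball x R)) ≤
      ENNReal.ofReal C₀ * ((volume (ball x R))⁻¹ * ∫⁻ y in ball x R, u y))
    (xB : Rn n) {R : ℝ} (hR : 0 < R)
    (hfin : essSup u (volume.restrict (ball xB R)) ≠ ⊤) :
    essSup (fun y => u y * (volume (ball xB R) ^ ((n : ℝ)⁻¹) + edist xB y) ^ (-α)) volume ≤
      (2 * ENNReal.ofReal C₀ * ENNReal.ofReal (max 2 (2 * C₀)) ^ α * rub n ^ (-α) + 1) *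
        essSup (fun y => u y * edist xB y ^ (-α)) (volume.restrict (ball xB R)ᶜ) := by
  set c := volume (ball xB R) ^ ((n : ℝ)⁻¹) with hc
  set G := essSup (fun y => u y * edist xB y ^ (-α)) (volume.restrict (ball xB R)ᶜ) with hG
  set t := max 2 (2 * C₀) with ht
  have ht2 : (2 : ℝ) ≤ t := le_max_left _ _
  have htC : 2 * C₀ ≤ t := le_max_right _ _
  have ht1 : (1 : ℝ) ≤ t := by linarith
  have htR : 0 < t * R := by nlinarith
  set a := essSup u (volume.restrict (ball xB R)) with ha
  set b := essSup u (volume.restrict (ball xB (t * R) \ ball xB R)) with hb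
  have hBB' : ball xB R ⊆ ball xB (t * R) := ball_subset_ball (by nlinarith)
  have hsplit : ∫⁻ y in ball xB (t * R), u y =
      (∫⁻ y in ball xB R, u y) + ∫⁻ y in ball xB (t * R) \ ball xB R, u y := by
    have h := lintegral_union (μ := (volume : Measure (Rn n))) (f := u)
      (measurableSet_ball.diff measurableSet_ball)
      (disjoint_sdiff_self_right (x := ball xB R) (y := ball xB (t * R)))
    rw [union_diff_cancel hBB'] at h
    exact h
  have hIB : ∫⁻ y in ball xB R, u y ≤ a * volume (ball xB R) :=
    setLIntegral_le_essSup _ _ _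
  have hIS : ∫⁻ y in ball xB (t * R) \ ball xB R, u y ≤ b * volume (ball xB (t * R)) :=
    le_trans (setLIntegral_le_essSup _ _ _) (mul_le_mul_right (measure_mono diff_subset) _)
  have hvol' : volume (ball xB (t * R)) ≠ 0 := (measure_ball_pos _ _ htR).ne'
  have hvolt : volume (ball xB (t * R)) ≠ ⊤ := measure_ball_lt_top.ne
  have hhalf : ENNReal.ofReal C₀ *
      ((volume (ball xB (t * R)))⁻¹ * (a * volume (ball xB R))) ≤ 2⁻¹ * a := by
    rw [volume_ball_eq hn xB hR, volume_ball_eq hn xB htR,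
      ENNReal.mul_inv (Or.inl (ENNReal.ofReal_pos.mpr (pow_pos htR n)).ne')
        (Or.inl ENNReal.ofReal_ne_top)]
    have hub : (ub n)⁻¹ * ub n = 1 := ENNReal.inv_mul_cancel (ub_pos n).ne' (ub_ne_top n)
    have hE : ENNReal.ofReal C₀ * ENNReal.ofReal (R ^ n) ≤
        2⁻¹ * ENNReal.ofReal ((t * R) ^ n) := by
      rw [← ENNReal.ofReal_mul hC₀.le,
        show ((2 : ℝ≥0∞))⁻¹ = ENNReal.ofReal 2⁻¹ by
          rw [ENNReal.ofReal_inv_of_pos two_pos, ENNReal.ofReal_ofNat],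
        ← ENNReal.ofReal_mul (by norm_num)]
      apply ENNReal.ofReal_le_ofReal
      have h1 : t ≤ t ^ n := le_self_pow₀ ht1 (by omega)
      have h2 : (t * R) ^ n = t ^ n * R ^ n := mul_pow t R n
      nlinarith [pow_pos hR n]
    calc ENNReal.ofReal C₀ * ((ENNReal.ofReal ((t * R) ^ n))⁻¹ * (ub n)⁻¹ *
          (a * (ENNReal.ofReal (R ^ n) * ub n)))
        = ENNReal.ofReal C₀ * ENNReal.ofReal (R ^ n) * (ENNReal.ofReal ((t * R) ^ n))⁻¹ *
            ((ub n)⁻¹ * ub n) * a := by ring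
      _ = ENNReal.ofReal C₀ * ENNReal.ofReal (R ^ n) *
            (ENNReal.ofReal ((t * R) ^ n))⁻¹ * a := by rw [hub, mul_one]
      _ ≤ 2⁻¹ * ENNReal.ofReal ((t * R) ^ n) * (ENNReal.ofReal ((t * R) ^ n))⁻¹ * a := by
          gcongr
      _ = 2⁻¹ * (ENNReal.ofReal ((t * R) ^ n) * (ENNReal.ofReal ((t * R) ^ n))⁻¹) * a := by
          ring
      _ = 2⁻¹ * a := by
          rw [ENNReal.mul_inv_cancel (ENNReal.ofReal_pos.mpr (pow_pos htR n)).ne'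
            ENNReal.ofReal_ne_top, mul_one]
  have hstepA : a ≤ 2⁻¹ * a + ENNReal.ofReal C₀ * b := by
    calc a ≤ essSup u (volume.restrict (ball xB (t * R))) := essSup_mono_set hBB'
      _ ≤ ENNReal.ofReal C₀ *
            ((volume (ball xB (t * R)))⁻¹ * ∫⁻ y in ball xB (t * R), u y) := hRH xB (t * R) htR
      _ = ENNReal.ofReal C₀ * ((volume (ball xB (t * R)))⁻¹ *
            ((∫⁻ y in ball xB R, u y) + ∫⁻ y in ball xB (t * R) \ ball xB R, u y)) := by
          rw [hsplit]
      _ ≤ ENNReal.ofReal C₀ * ((volume (ball xB (t * R)))⁻¹ *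
            (a * volume (ball xB R) + b * volume (ball xB (t * R)))) := by gcongr
      _ = ENNReal.ofReal C₀ * ((volume (ball xB (t * R)))⁻¹ * (a * volume (ball xB R))) +
            ENNReal.ofReal C₀ * ((volume (ball xB (t * R)))⁻¹ * volume (ball xB (t * R))) * b := by
          ring
      _ ≤ 2⁻¹ * a + ENNReal.ofReal C₀ * b := by
          apply add_le_add hhalf
          rw [ENNReal.inv_mul_cancel hvol' hvolt, mul_one]
  have hstepB : a ≤ 2 * (ENNReal.ofReal C₀ * b) := by
    have h1 : a - 2⁻¹ * a ≤ ENNReal.ofReal C₀ * b :=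
      tsub_le_iff_right.mpr (by rw [add_comm] at hstepA; exact hstepA)
    have h2 : 2⁻¹ * a ≤ ENNReal.ofReal C₀ * b := by
      have heq : a - 2⁻¹ * a = 2⁻¹ * a := by
        rw [show (2⁻¹ : ℝ≥0∞) * a = a / 2 by rw [div_eq_mul_inv, mul_comm],
          ENNReal.sub_half hfin]
      rwa [heq] at h1
    calc a = 2 * (2⁻¹ * a) := by
          rw [← mul_assoc, ENNReal.mul_inv_cancel two_ne_zero ENNReal.ofNat_ne_top, one_mul]
      _ ≤ 2 * (ENNReal.ofReal C₀ * b) := mul_le_mul_right h2 _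
  have hstepC : b ≤ ENNReal.ofReal (t * R) ^ α * G := by
    calc b ≤ essSup (fun y => ENNReal.ofReal (t * R) ^ α * (u y * edist xB y ^ (-α)))
          (volume.restrict (ball xB (t * R) \ ball xB R)) := by
          refine essSup_mono_ae ?_
          refine (ae_restrict_iff' (measurableSet_ball.diff measurableSet_ball)).mpr
            (Filter.Eventually.of_forall fun y hy => ?_)
          have hyR : R ≤ dist xB y := by
            rw [dist_comm]; exact not_lt.mp (by simpa [mem_ball] using hy.2)
          have hyt : dist xB y < t * R := by rw [dist_comm]; exact mem_ball.mp hy.1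
          exact le_rpow_mul
            (by rw [edist_dist]; exact (ENNReal.ofReal_pos.mpr (lt_of_lt_of_le hR hyR)).ne')
            (edist_ne_top _ _)
            (by rw [edist_dist]; exact ENNReal.ofReal_le_ofReal hyt.le) hα.le
      _ = ENNReal.ofReal (t * R) ^ α * essSup (fun y => u y * edist xB y ^ (-α))
            (volume.restrict (ball xB (t * R) \ ball xB R)) := ENNReal.essSup_const_mul
      _ ≤ ENNReal.ofReal (t * R) ^ α * G :=
          mul_le_mul_right (essSup_mono_set fun y hy => hy.2) _
  set D₁ := 2 * ENNReal.ofReal C₀ * ENNReal.ofReal t ^ α * rub n ^ (-α) with hD₁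
  have hcollapse : ENNReal.ofReal (t * R) ^ α * ENNReal.ofReal R ^ (-α) =
      ENNReal.ofReal t ^ α := by
    rw [ENNReal.ofReal_mul (by linarith),
      ENNReal.mul_rpow_of_ne_top ENNReal.ofReal_ne_top ENNReal.ofReal_ne_top, mul_assoc,
      self_inv_rpow (ENNReal.ofReal_pos.mpr hR).ne' ENNReal.ofReal_ne_top, mul_one]
  refine essSup_le_of_ae_le _ ?_
  have hBae : ∀ᵐ y ∂(volume : Measure (Rn n)), y ∈ ball xB R → u y ≤ a :=
    (ae_restrict_iff' measurableSet_ball).mp (ENNReal.ae_le_essSup u)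
  have hBcae : ∀ᵐ y ∂(volume : Measure (Rn n)), y ∈ (ball xB R)ᶜ →
      u y * edist xB y ^ (-α) ≤ G :=
    (ae_restrict_iff' measurableSet_ball.compl).mp (ENNReal.ae_le_essSup _)
  filter_upwards [hBae, hBcae] with y h1 h2
  by_cases hy : y ∈ ball xB R
  · have hcc : c ^ (-α) = ENNReal.ofReal R ^ (-α) * rub n ^ (-α) := by
      rw [hc, cB_eq hn xB hR,
        ENNReal.mul_rpow_of_ne_top ENNReal.ofReal_ne_top (rub_ne_top n)]
    calc u y * (c + edist xB y) ^ (-α)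
        ≤ a * c ^ (-α) := mul_le_mul' (h1 hy) (rpow_neg_le_rpow_neg hα.le le_self_add)
      _ ≤ 2 * (ENNReal.ofReal C₀ * (ENNReal.ofReal (t * R) ^ α * G)) * c ^ (-α) :=
          mul_le_mul_left
            (hstepB.trans (mul_le_mul_right (mul_le_mul_right hstepC _) _)) _
      _ = D₁ * G := by
          rw [hcc, hD₁]
          calc 2 * (ENNReal.ofReal C₀ * (ENNReal.ofReal (t * R) ^ α * G)) *
                (ENNReal.ofReal R ^ (-α) * rub n ^ (-α))
              = 2 * ENNReal.ofReal C₀ *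
                  (ENNReal.ofReal (t * R) ^ α * ENNReal.ofReal R ^ (-α)) *
                  rub n ^ (-α) * G := by ring
            _ = 2 * ENNReal.ofReal C₀ * ENNReal.ofReal t ^ α * rub n ^ (-α) * G := by
                rw [hcollapse]
      _ ≤ (D₁ + 1) * G := mul_le_mul_left le_self_add _
  · calc u y * (c + edist xB y) ^ (-α)
        ≤ u y * edist xB y ^ (-α) :=
          mul_le_mul_right (rpow_neg_le_rpow_neg hα.le le_add_self) _
      _ ≤ G := h2 hy
      _ ≤ (D₁ + 1) * G := by
          calc G = 1 * G := (one_mul G).symm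
            _ ≤ (D₁ + 1) * G := mul_le_mul_left le_add_self _

lemma conjE_one : conjE 1 = ⊤ := by simp [conjE]

lemma conjE_ne_top {q : ℝ≥0∞} (hq : q ≠ 1) : conjE q ≠ ⊤ := by
  rw [conjE, if_neg hq]
  split_ifs <;> simp

lemma conjE_toReal_pos {q : ℝ≥0∞} (h1 : 1 ≤ q) (hq : q ≠ 1) : 0 < (conjE q).toReal := by
  rw [conjE, if_neg hq]
  by_cases ht : q = ⊤
  · rw [if_pos ht]; norm_num
  · rw [if_neg ht]
    have hlt : 1 < q.toReal := by
      have := (ENNReal.toReal_lt_toReal (by simp) ht).mpr (lt_of_le_of_ne h1 (Ne.symm hq))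
      simpa using this
    rw [ENNReal.toReal_ofReal (div_nonneg (by linarith) (by linarith))]
    exact div_pos (by linarith) (by linarith)

lemma factor_ne_top {m : ℕ} {W : ℝ≥0∞} {F : Fin m → ℝ≥0∞} {C : ℝ}
    (hW : W ≠ 0) (hF : ∀ j, F j ≠ 0) (h : W * ∏ j, F j ≤ ENNReal.ofReal C) (i : Fin m) :
    F i ≠ ⊤ := by
  intro htop
  have hprod : (∏ j, F j) = ⊤ := by
    rw [← Finset.mul_prod_erase Finset.univ F (Finset.mem_univ i), htop, ENNReal.top_mul]
    exact Finset.prod_ne_zero_iff.mpr fun j _ => hF j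
  rw [hprod, ENNReal.mul_top hW] at h
  exact ENNReal.ofReal_ne_top (top_le_iff.mp h)

lemma shifted_ball_subset (x : Rn n) {R : ℝ} (hR : 0 < R) (e : Rn n) (he : ‖e‖ = 1) :
    ball (x + (3 * R / 2) • e) (R / 2) ⊆ (ball x R)ᶜ := by
  intro y hy
  have hxz : dist x (x + (3 * R / 2) • e) = 3 * R / 2 := dist_center x e he (by linarith)
  have h1 : dist y (x + (3 * R / 2) • e) < R / 2 := mem_ball.mp hy
  have h2 : dist x (x + (3 * R / 2) • e) ≤ dist x y + dist y (x + (3 * R / 2) • e) :=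
    dist_triangle _ _ _
  simp only [mem_compl_iff, mem_ball, not_lt]
  rw [dist_comm y x]
  linarith

lemma lpOn_top {q : ℝ≥0∞} (hq : q = ⊤) (g : Rn n → ℝ≥0∞) (s : Set (Rn n)) :
    lpOn q g s = essSup g (volume.restrict s) := by unfold lpOn; rw [if_pos hq]

lemma lpOn_ne_top' {q : ℝ≥0∞} (hq : q ≠ ⊤) (g : Rn n → ℝ≥0∞) (s : Set (Rn n)) :
    lpOn q g s = (∫⁻ y in s, g y ^ q.toReal) ^ (1 / q.toReal) := by
  unfold lpOn; rw [if_neg hq]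

end S6

/-- under `RH_∞` on `v_i⁻¹` for `i ∈ I₁` and doubling of
`v_i^{-p_i'}` for `i ∈ I₂`, the condition `ℍ_m(p⃗,γ,δ)` is equivalent to the
global condition. -/
theorem statement6 {n m : ℕ} (hn : 1 ≤ n) (hm : 1 ≤ m) (γ : ℝ) (hγ0 : 0 < γ)
    (hγ : γ < m * n) (γv : Fin m → ℝ) (hγv : ∀ i, 0 < γv i ∧ γv i < n)
    (hγsum : ∑ i, γv i = γ) (δ : ℝ) (p : Fin m → ℝ≥0∞) (hp : ∀ i, 1 ≤ p i)
    (w : Rn n → ℝ≥0∞) (v : Fin m → Rn n → ℝ≥0∞) (hw : IsWeight w)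
    (hv : ∀ i, IsWeight (v i))
    (hRHinf : ∀ i, p i = 1 → memRHinf fun y => (v i y)⁻¹)
    (hdbl : ∀ i, p i ≠ 1 → IsDoubling fun y => (v i y)⁻¹ ^ (conjE (p i)).toReal) :
    Hm m γv δ p w v ↔ GlobalCond m γv δ p w v := by
  classical
  have hm1 : (1 : ℝ) ≤ (m : ℝ) := by exact_mod_cast hm
  have hαpos : ∀ i, 0 < (n : ℝ) - γv i + 1 / (m : ℝ) := by
    intro i
    have h1 : γv i < n := (hγv i).2
    have h2 : 0 < 1 / (m : ℝ) := by positivity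
    linarith
  have hq : ∀ i, conjE (p i) = ⊤ ∨ 0 < (conjE (p i)).toReal := by
    intro i
    by_cases h1 : p i = 1
    · left; rw [h1]; exact S6.conjE_one
    · right; exact S6.conjE_toReal_pos (hp i) h1
  have humeas : ∀ i, Measurable fun y => (v i y)⁻¹ := fun i => ((hv i).1).inv
  constructor
  · rintro ⟨C, hC, hbd⟩
    set K : Fin m → ℝ≥0∞ :=
      fun i => (S6.rub n + 1) ^ ((n : ℝ) - γv i + 1 / (m : ℝ)) with hK
    have hKt : ∀ i, K i ≠ ⊤ := fun i =>
      ENNReal.rpow_ne_top_of_nonneg (hαpos i).le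
        (by simp [ENNReal.add_eq_top, S6.rub_ne_top n])
    have hXt : (∏ i, K i) * ENNReal.ofReal C ≠ ⊤ :=
      ENNReal.mul_ne_top (ENNReal.prod_ne_top fun i _ => hKt i) ENNReal.ofReal_ne_top
    refine ⟨((∏ i, K i) * ENNReal.ofReal C).toReal + 1, ?_, fun xB R hR => ?_⟩
    · have := ENNReal.toReal_nonneg (a := (∏ i, K i) * ENNReal.ofReal C)
      linarith
    · have hfac : ∀ i, lpOn (conjE (p i))
          (fun y => (v i y)⁻¹ * edist xB y ^ (-((n : ℝ) - γv i + 1 / (m : ℝ))))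
          (ball xB R)ᶜ ≤ K i * HmFactor m (γv i) (conjE (p i)) (v i) xB R := by
        intro i
        exact S6.dir1_factor hn (fun y => (v i y)⁻¹) (hαpos i).le (conjE (p i)) (hq i) xB hR
      calc essSup w (volume.restrict (ball xB R)) *
            volume (ball xB R) ^ (-((δ - 1) / (n : ℝ))) *
            ∏ i, lpOn (conjE (p i))
              (fun y => (v i y)⁻¹ * edist xB y ^ (-((n : ℝ) - γv i + 1 / (m : ℝ))))
              (ball xB R)ᶜ
          ≤ essSup w (volume.restrict (ball xB R)) *
              volume (ball xB R) ^ (-((δ - 1) / (n : ℝ))) *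
              ∏ i, (K i * HmFactor m (γv i) (conjE (p i)) (v i) xB R) :=
            mul_le_mul_right (Finset.prod_le_prod' fun i _ => hfac i) _
        _ = (∏ i, K i) * (essSup w (volume.restrict (ball xB R)) *
              volume (ball xB R) ^ (-((δ - 1) / (n : ℝ))) *
              ∏ i, HmFactor m (γv i) (conjE (p i)) (v i) xB R) := by
            rw [Finset.prod_mul_distrib]; ring
        _ ≤ (∏ i, K i) * ENNReal.ofReal C := mul_le_mul_right (hbd xB R hR) _
        _ = ENNReal.ofReal (((∏ i, K i) * ENNReal.ofReal C).toReal) :=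
            (ENNReal.ofReal_toReal hXt).symm
        _ ≤ ENNReal.ofReal (((∏ i, K i) * ENNReal.ofReal C).toReal + 1) :=
            ENNReal.ofReal_le_ofReal (by linarith)
  · rintro ⟨C, hC, hbd⟩
    set e : Rn n := EuclideanSpace.single (⟨0, hn⟩ : Fin n) (1 : ℝ) with he'
    have he : ‖e‖ = 1 := by rw [he', EuclideanSpace.norm_single]; norm_num
    -- positivity of the weight part
    have hWpos : ∀ (x : Rn n) (R : ℝ), 0 < R →
        essSup w (volume.restrict (ball x R)) *
          volume (ball x R) ^ (-((δ - 1) / (n : ℝ))) ≠ 0 := by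
      intro x R hR
      apply mul_ne_zero
      · apply (S6.essSup_pos_of_pos ?_ ?_).ne'
        · rw [Ne, Measure.restrict_eq_zero]; exact (measure_ball_pos _ _ hR).ne'
        · exact ae_restrict_of_ae (hw.2.1.mono fun y hy => hy.1)
      · exact (ENNReal.rpow_pos (measure_ball_pos _ _ hR) measure_ball_lt_top.ne).ne'
    -- positivity of each global factor
    have hGpos : ∀ (x : Rn n) (R : ℝ), 0 < R → ∀ j, lpOn (conjE (p j))
        (fun y => (v j y)⁻¹ * edist x y ^ (-((n : ℝ) - γv j + 1 / (m : ℝ))))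
        (ball x R)ᶜ ≠ 0 := by
      intro x R hR j
      set s : Set (Rn n) := ball (x + (3 * R / 2) • e) (R / 2) with hs
      have hsub : s ⊆ (ball x R)ᶜ := S6.shifted_ball_subset x hR e he
      have hsne : (volume.restrict s : Measure (Rn n)) ≠ 0 := by
        rw [Ne, Measure.restrict_eq_zero]
        exact (measure_ball_pos _ _ (by linarith : 0 < R / 2)).ne'
      have haepos : ∀ᵐ y ∂(volume.restrict s : Measure (Rn n)),
          0 < (v j y)⁻¹ * edist x y ^ (-((n : ℝ) - γv j + 1 / (m : ℝ))) := by
        filter_upwards [ae_restrict_of_ae ((hv j).2.1)] with y hy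
        exact ENNReal.mul_pos (ENNReal.inv_pos.mpr hy.2.ne).ne'
          (S6.rpow_neg_pos (edist_ne_top _ _) (hαpos j)).ne'
      by_cases hp1 : p j = 1
      · have hconj : conjE (p j) = ⊤ := by rw [hp1]; exact S6.conjE_one
        rw [S6.lpOn_top hconj]
        have h1 : 0 < essSup
            (fun y => (v j y)⁻¹ * edist x y ^ (-((n : ℝ) - γv j + 1 / (m : ℝ))))
            (volume.restrict s) := S6.essSup_pos_of_pos hsne haepos
        exact (h1.trans_le (S6.essSup_mono_set hsub)).ne'
      · have hconjt : conjE (p j) ≠ ⊤ := S6.conjE_ne_top hp1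
        have hqr : 0 < (conjE (p j)).toReal := S6.conjE_toReal_pos (hp j) hp1
        rw [S6.lpOn_ne_top' hconjt]
        set g : Rn n → ℝ≥0∞ := fun y =>
          ((v j y)⁻¹ * edist x y ^ (-((n : ℝ) - γv j + 1 / (m : ℝ)))) ^
            (conjE (p j)).toReal with hg
        have hgmeas : Measurable g := by
          have h1 : Measurable fun y : Rn n => edist x y :=
            (continuous_const.edist continuous_id).measurable
          have h2 : Measurable fun y : Rn n =>
              edist x y ^ (-((n : ℝ) - γv j + 1 / (m : ℝ))) :=
            ENNReal.continuous_rpow_const.measurable.comp h1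
          exact ENNReal.continuous_rpow_const.measurable.comp ((humeas j).mul h2)
        have hgae : ∀ᵐ y ∂(volume.restrict s : Measure (Rn n)), 0 < g y := by
          filter_upwards [haepos] with y hy
          exact S6.rpow_pos' hy hqr
        have hint : 0 < ∫⁻ y in s, g y := by
          rw [lintegral_pos_iff_support hgmeas]
          have hnull : (volume.restrict s) (Function.support g)ᶜ = 0 := by
            rw [ae_iff] at hgae
            apply measure_mono_null _ hgae
            intro y hy
            simp only [Function.mem_support, not_not, mem_compl_iff] at hy
            simp [hy]
          by_contra h0
          push_neg at h0
          have h0' : (volume.restrict s) (Function.support g) = 0 := le_antisymm h0 zero_le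
          have h1 := measure_union_le (μ := (volume.restrict s : Measure (Rn n)))
            (Function.support g) (Function.support g)ᶜ
          rw [Set.union_compl_self, h0', hnull, Measure.restrict_apply_univ] at h1
          exact absurd (le_antisymm (by simpa using h1) zero_le)
            (measure_ball_pos _ _ (by linarith : 0 < R / 2)).ne'
        have hint2 : 0 < ∫⁻ y in (ball x R)ᶜ, g y :=
          hint.trans_le (lintegral_mono_set hsub)
        intro h0
        rcases ENNReal.rpow_eq_zero_iff.mp h0 with ⟨h1, _⟩ | ⟨_, h2⟩
        · exact hint2.ne' h1
        · exact absurd h2 (not_lt.mpr (by positivity))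
    -- finiteness of the local essSup for i ∈ I₁
    have hfin : ∀ i, p i = 1 → ∀ (xB : Rn n) (R : ℝ), 0 < R →
        essSup (fun y => (v i y)⁻¹) (volume.restrict (ball xB R)) ≠ ⊤ := by
      intro i hp1 xB R hR
      set x' : Rn n := xB + (3 * R) • e with hx'
      have hdx : dist xB x' = 3 * R := S6.dist_center xB e he (by linarith)
      have hsub : ball xB R ⊆ (ball x' R)ᶜ := by
        intro y hy
        simp only [mem_compl_iff, mem_ball, not_lt]
        have h1 : dist y xB < R := mem_ball.mp hy
        have h2 : dist xB x' ≤ dist xB y + dist y x' := dist_triangle _ _ _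
        rw [dist_comm xB y] at h2
        linarith
      have hb := hbd x' R hR
      have hFne : lpOn (conjE (p i))
          (fun y => (v i y)⁻¹ * edist x' y ^ (-((n : ℝ) - γv i + 1 / (m : ℝ))))
          (ball x' R)ᶜ ≠ ⊤ :=
        S6.factor_ne_top (hWpos x' R hR) (fun j => hGpos x' R hR j) hb i
      have hconj : conjE (p i) = ⊤ := by rw [hp1]; exact S6.conjE_one
      rw [S6.lpOn_top hconj] at hFne
      have hα := hαpos i
      have hstep : essSup (fun y => (v i y)⁻¹) (volume.restrict (ball xB R)) ≤
          ENNReal.ofReal (4 * R) ^ ((n : ℝ) - γv i + 1 / (m : ℝ)) *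
            essSup (fun y => (v i y)⁻¹ * edist x' y ^ (-((n : ℝ) - γv i + 1 / (m : ℝ))))
              (volume.restrict (ball x' R)ᶜ) := by
        calc essSup (fun y => (v i y)⁻¹) (volume.restrict (ball xB R))
            ≤ essSup (fun y => ENNReal.ofReal (4 * R) ^ ((n : ℝ) - γv i + 1 / (m : ℝ)) *
                ((v i y)⁻¹ * edist x' y ^ (-((n : ℝ) - γv i + 1 / (m : ℝ)))))
                (volume.restrict (ball xB R)) := by
              refine essSup_mono_ae ?_
              refine (ae_restrict_iff' measurableSet_ball).mpr
                (Filter.Eventually.of_forall fun y hy => ?_)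
              have h1 : dist y xB < R := mem_ball.mp hy
              have h2 : dist x' y ≤ dist x' xB + dist xB y := dist_triangle _ _ _
              have h3 : dist xB x' ≤ dist xB y + dist y x' := dist_triangle _ _ _
              rw [dist_comm x' xB] at h2
              rw [dist_comm xB y] at h2 h3
              rw [dist_comm y x'] at h3
              apply S6.le_rpow_mul ?_ (edist_ne_top _ _) ?_ hα.le
              · rw [edist_dist]
                exact (ENNReal.ofReal_pos.mpr (by linarith)).ne'
              · rw [edist_dist]
                exact ENNReal.ofReal_le_ofReal (by linarith)
          _ = ENNReal.ofReal (4 * R) ^ ((n : ℝ) - γv i + 1 / (m : ℝ)) *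
                essSup (fun y => (v i y)⁻¹ * edist x' y ^ (-((n : ℝ) - γv i + 1 / (m : ℝ))))
                  (volume.restrict (ball xB R)) := ENNReal.essSup_const_mul
          _ ≤ _ := mul_le_mul_right (S6.essSup_mono_set hsub) _
      exact ne_top_of_le_ne_top
        (ENNReal.mul_ne_top
          (ENNReal.rpow_ne_top_of_nonneg hα.le ENNReal.ofReal_ne_top) hFne) hstep
    -- the factor-wise bounds with uniform constants
    have hfac : ∀ i, ∃ D : ℝ≥0∞, D ≠ ⊤ ∧ ∀ (xB : Rn n) (R : ℝ), 0 < R →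
        HmFactor m (γv i) (conjE (p i)) (v i) xB R ≤
          D * lpOn (conjE (p i))
            (fun y => (v i y)⁻¹ * edist xB y ^ (-((n : ℝ) - γv i + 1 / (m : ℝ))))
            (ball xB R)ᶜ := by
      intro i
      have hα := hαpos i
      have hrubne : ∀ β : ℝ, S6.rub n ^ (-β) ≠ ⊤ := fun β => by
        rw [ENNReal.rpow_neg]
        exact ENNReal.inv_ne_top.mpr
          (ENNReal.rpow_pos (S6.rub_pos n) (S6.rub_ne_top n)).ne'
      by_cases hp1 : p i = 1
      · obtain ⟨C₀, hC₀, hRH⟩ := hRHinf i hp1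
        have hconj : conjE (p i) = ⊤ := by rw [hp1]; exact S6.conjE_one
        refine ⟨2 * ENNReal.ofReal C₀ *
            ENNReal.ofReal (max 2 (2 * C₀)) ^ ((n : ℝ) - γv i + 1 / (m : ℝ)) *
            S6.rub n ^ (-((n : ℝ) - γv i + 1 / (m : ℝ))) + 1, ?_, ?_⟩
        · refine ENNReal.add_ne_top.mpr ⟨?_, ENNReal.one_ne_top⟩
          exact ENNReal.mul_ne_top
            (ENNReal.mul_ne_top
              (ENNReal.mul_ne_top (by simp) ENNReal.ofReal_ne_top)
              (ENNReal.rpow_ne_top_of_nonneg hα.le ENNReal.ofReal_ne_top))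
            (hrubne _)
        · intro xB R hR
          rw [HmFactor, S6.lpOn_top hconj, S6.lpOn_top hconj, Measure.restrict_univ]
          exact S6.dir2_factor_inf hn hα hC₀ hRH xB hR (hfin i hp1 xB R hR)
      · obtain ⟨C₀, hC₀, hdb⟩ := hdbl i hp1
        have hconjt : conjE (p i) ≠ ⊤ := S6.conjE_ne_top hp1
        have hqr : 0 < (conjE (p i)).toReal := S6.conjE_toReal_pos (hp i) hp1
        refine ⟨(S6.rub n ^ (-(((n : ℝ) - γv i + 1 / (m : ℝ)) * (conjE (p i)).toReal)) *
            ENNReal.ofReal C₀ ^ 3 *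
            ENNReal.ofReal 2 ^ (((n : ℝ) - γv i + 1 / (m : ℝ)) * (conjE (p i)).toReal) + 1) ^
              (1 / (conjE (p i)).toReal), ?_, ?_⟩
        · apply ENNReal.rpow_ne_top_of_nonneg (by positivity)
          refine ENNReal.add_ne_top.mpr ⟨?_, ENNReal.one_ne_top⟩
          exact ENNReal.mul_ne_top
            (ENNReal.mul_ne_top (hrubne _) (ENNReal.pow_ne_top ENNReal.ofReal_ne_top))
            (ENNReal.rpow_ne_top_of_nonneg (by positivity) ENNReal.ofReal_ne_top)
        · intro xB R hR
          rw [HmFactor, S6.lpOn_ne_top' hconjt, S6.lpOn_ne_top' hconjt, setLIntegral_univ]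
          exact S6.dir2_factor_int hn hα hqr hC₀ hdb e he xB hR
    choose D hDt hD using hfac
    have hXt : (∏ i, D i) * ENNReal.ofReal C ≠ ⊤ :=
      ENNReal.mul_ne_top (ENNReal.prod_ne_top fun i _ => hDt i) ENNReal.ofReal_ne_top
    refine ⟨((∏ i, D i) * ENNReal.ofReal C).toReal + 1, ?_, fun xB R hR => ?_⟩
    · have := ENNReal.toReal_nonneg (a := (∏ i, D i) * ENNReal.ofReal C)
      linarith
    · calc essSup w (volume.restrict (ball xB R)) *
            volume (ball xB R) ^ (-((δ - 1) / (n : ℝ))) *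
            ∏ i, HmFactor m (γv i) (conjE (p i)) (v i) xB R
          ≤ essSup w (volume.restrict (ball xB R)) *
              volume (ball xB R) ^ (-((δ - 1) / (n : ℝ))) *
              ∏ i, (D i * lpOn (conjE (p i))
                (fun y => (v i y)⁻¹ * edist xB y ^ (-((n : ℝ) - γv i + 1 / (m : ℝ))))
                (ball xB R)ᶜ) :=
            mul_le_mul_right (Finset.prod_le_prod' fun i _ => hD i xB R hR) _
        _ = (∏ i, D i) * (essSup w (volume.restrict (ball xB R)) *
              volume (ball xB R) ^ (-((δ - 1) / (n : ℝ))) *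
              ∏ i, lpOn (conjE (p i))
                (fun y => (v i y)⁻¹ * edist xB y ^ (-((n : ℝ) - γv i + 1 / (m : ℝ))))
                (ball xB R)ᶜ) := by
            rw [Finset.prod_mul_distrib]; ring
        _ ≤ (∏ i, D i) * ENNReal.ofReal C := mul_le_mul_right (hbd xB R hR) _
        _ = ENNReal.ofReal (((∏ i, D i) * ENNReal.ofReal C).toReal) :=
            (ENNReal.ofReal_toReal hXt).symm
        _ ≤ ENNReal.ofReal (((∏ i, D i) * ENNReal.ofReal C).toReal + 1) :=
            ENNReal.ofReal_le_ofReal (by linarith)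
end
end

section
/- Let 0 < γ < mn, δ ∈ ℝ, p⃗ a vector of exponents, and (w,v⃗) a pair of weights such that v_i^{-1} ∈ RH_∞ for every i ∈ I_1 and v_i^{-p_i'} is doubling for every i ∈ I_2. If (w,v⃗) satisfies the global condition, then (w,v⃗) satisfies the local condition. -/
open MeasureTheory Metric Set
open scoped ENNReal NNReal BigOperators Classical

noncomputable section

namespace St7

lemma prod_rpow_fin {ι : Type*} (s : Finset ι) (x : ℝ≥0∞) (hx : x ≠ 0) (hx' : x ≠ ⊤)
    (f : ι → ℝ) : ∏ i ∈ s, x ^ f i = x ^ (∑ i ∈ s, f i) := by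
  classical
  induction s using Finset.induction_on with
  | empty => simp
  | insert _ _ h ih =>
      rw [Finset.prod_insert h, Finset.sum_insert h, ih, ← ENNReal.rpow_add _ _ hx hx']

lemma setLIntegral_le_essSup_mul {n : ℕ} (f : Rn n → ℝ≥0∞) (s : Set (Rn n)) :
    ∫⁻ y in s, f y ≤ essSup f (volume.restrict s) * volume s := by
  calc ∫⁻ y in s, f y ≤ ∫⁻ _ in s, essSup f (volume.restrict s) :=
        lintegral_mono_ae (ENNReal.ae_le_essSup f)
    _ = essSup f (volume.restrict s) * volume s := setLIntegral_const _ _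

lemma essSup_pos_of_ae_pos {n : ℕ} {g : Rn n → ℝ≥0∞}
    (hg : ∀ᵐ x ∂(volume : Measure (Rn n)), 0 < g x)
    {s : Set (Rn n)} (hs : volume s ≠ 0) : essSup g (volume.restrict s) ≠ 0 := by
  intro h
  have h1 := ENNReal.ae_le_essSup (μ := (volume : Measure (Rn n)).restrict s) g
  rw [h] at h1
  have h2 : ∀ᵐ x ∂((volume : Measure (Rn n)).restrict s), False := by
    filter_upwards [h1, ae_restrict_of_ae hg] with x hx hx'
    exact hx'.ne' (le_antisymm hx (zero_le))
  rw [ae_iff] at h2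
  simp only [not_false_eq_true, setOf_true, Measure.restrict_apply_univ] at h2
  exact hs h2

lemma setLIntegral_pos {n : ℕ} {g : Rn n → ℝ≥0∞} (hgm : Measurable g)
    (hg : ∀ᵐ x ∂(volume : Measure (Rn n)), 0 < g x)
    {s : Set (Rn n)} (hs : volume s ≠ 0) : ∫⁻ y in s, g y ≠ 0 := by
  intro h
  rw [lintegral_eq_zero_iff hgm] at h
  have h2 : ∀ᵐ x ∂((volume : Measure (Rn n)).restrict s), False := by
    filter_upwards [h, ae_restrict_of_ae hg] with x hx hx'
    simp only [Pi.zero_apply] at hx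
    exact hx'.ne' hx
  rw [ae_iff] at h2
  simp only [not_false_eq_true, setOf_true, Measure.restrict_apply_univ] at h2
  exact hs h2

lemma rn_nontrivial {n : ℕ} (hn : 1 ≤ n) : Nontrivial (Rn n) := by
  refine ⟨⟨0, EuclideanSpace.single (⟨0, hn⟩ : Fin n) 1, fun h => ?_⟩⟩
  have := congrArg norm h
  simp [EuclideanSpace.norm_single] at this

lemma vol_ball_nat {n : ℕ} (hn : 1 ≤ n) (x : Rn n) {R : ℝ} (hR : 0 ≤ R) :
    volume (ball x R) = ENNReal.ofReal (R ^ n) * volume (ball (0 : Rn n) 1) := by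
  haveI := rn_nontrivial hn
  rw [Measure.addHaar_ball volume x hR, finrank_euclideanSpace_fin]

lemma vol_ball_rpow {n : ℕ} (hn : 1 ≤ n) (x : Rn n) {R : ℝ} (hR : 0 ≤ R) :
    volume (ball x R) = ENNReal.ofReal R ^ (n : ℝ) * volume (ball (0 : Rn n) 1) := by
  rw [vol_ball_nat hn x hR, ENNReal.ofReal_pow hR, ← ENNReal.rpow_natCast]

lemma le_rpow_mul_self {α : ℝ} (hα : 0 ≤ α) {c : ℝ} (hc : 0 < c) {d : ℝ≥0∞}
    (hd : d ≤ ENNReal.ofReal c) (x : ℝ≥0∞) :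
    x ≤ ENNReal.ofReal c ^ α * (x * d ^ (-α)) := by
  have hne0 : ENNReal.ofReal c ≠ 0 := (ENNReal.ofReal_pos.mpr hc).ne'
  have hpow0 : ENNReal.ofReal c ^ α ≠ 0 := by
    simp [ENNReal.rpow_eq_zero_iff, hne0, ENNReal.ofReal_ne_top]
  have hpowt : ENNReal.ofReal c ^ α ≠ ⊤ := by
    simp [ENNReal.rpow_eq_top_iff, hne0, ENNReal.ofReal_ne_top]
  have key : ENNReal.ofReal c ^ α * (ENNReal.ofReal c ^ α)⁻¹ = 1 :=
    ENNReal.mul_inv_cancel hpow0 hpowt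
  have h : (ENNReal.ofReal c ^ α)⁻¹ ≤ d ^ (-α) := by
    rw [ENNReal.rpow_neg]
    exact ENNReal.inv_le_inv.mpr (ENNReal.rpow_le_rpow hd hα)
  calc x = ENNReal.ofReal c ^ α * (x * (ENNReal.ofReal c ^ α)⁻¹) := by
        rw [mul_comm x, ← mul_assoc, key, one_mul]
    _ ≤ ENNReal.ofReal c ^ α * (x * d ^ (-α)) :=
        mul_le_mul_right (mul_le_mul_right h x) _

lemma rpow_cancel_le {α : ℝ} (hα : 0 ≤ α) {c : ℝ} (hc : 0 < c) {d : ℝ≥0∞} (hd0 : d ≠ 0)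
    (hdc : d ≤ ENNReal.ofReal c) {x G : ℝ≥0∞} (h : x * d ^ (-α) ≤ G) :
    x ≤ ENNReal.ofReal c ^ α * G := by
  have hdt : d ≠ ⊤ := (lt_of_le_of_lt hdc ENNReal.ofReal_lt_top).ne
  have hα0 : d ^ α ≠ 0 := by simp [ENNReal.rpow_eq_zero_iff, hd0, hdt]
  have hαt : d ^ α ≠ ⊤ := by simp [ENNReal.rpow_eq_top_iff, hd0, hdt]
  have key : x = x * d ^ (-α) * d ^ α := by
    rw [ENNReal.rpow_neg, mul_assoc, ENNReal.inv_mul_cancel hα0 hαt, mul_one]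
  rw [key, mul_comm (ENNReal.ofReal c ^ α) G]
  exact mul_le_mul' h (ENNReal.rpow_le_rpow hdc hα)

lemma conjE_inv_toReal_add {q : ℝ≥0∞} (hq : 1 ≤ q) :
    ((conjE q)⁻¹).toReal + (q⁻¹).toReal = 1 := by
  rcases eq_or_ne q 1 with h | h
  · simp [h, conjE]
  rcases eq_or_ne q ⊤ with ht | ht
  · simp [ht, conjE]
  · have hq1 : 1 < q.toReal := by
      rw [show (1:ℝ) = (1 : ℝ≥0∞).toReal by simp]
      exact (ENNReal.toReal_lt_toReal (by simp) ht).mpr (lt_of_le_of_ne hq (Ne.symm h))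
    have h1 : conjE q = ENNReal.ofReal (q.toReal / (q.toReal - 1)) := by
      simp [conjE, h, ht]
    have hpos : 0 ≤ q.toReal / (q.toReal - 1) := div_nonneg (by linarith) (by linarith)
    rw [h1, ENNReal.toReal_inv, ENNReal.toReal_inv, ENNReal.toReal_ofReal hpos]
    have ht1 : q.toReal - 1 ≠ 0 := by linarith
    have ht0 : q.toReal ≠ 0 := by linarith
    field_simp
    ring

lemma conjE_one : conjE 1 = ⊤ := by simp [conjE]

lemma conjE_ne_top {q : ℝ≥0∞} (hq : 1 ≤ q) (h : q ≠ 1) : conjE q ≠ ⊤ := by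
  rcases eq_or_ne q ⊤ with ht | ht
  · simp [ht, conjE]
  · simp [conjE, h, ht]

lemma conjE_toReal_ge_one {q : ℝ≥0∞} (hq : 1 ≤ q) (h : q ≠ 1) :
    1 ≤ (conjE q).toReal := by
  rcases eq_or_ne q ⊤ with ht | ht
  · simp [ht, conjE]
  · have hq1 : 1 < q.toReal := by
      rw [show (1:ℝ) = (1 : ℝ≥0∞).toReal by simp]
      exact (ENNReal.toReal_lt_toReal (by simp) ht).mpr (lt_of_le_of_ne hq (Ne.symm h))
    have h1 : conjE q = ENNReal.ofReal (q.toReal / (q.toReal - 1)) := by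
      simp [conjE, h, ht]
    rw [h1, ENNReal.toReal_ofReal (div_nonneg (by linarith) (by linarith))]
    rw [le_div_iff₀ (by linarith)]
    linarith

/-- center shifted by `2R` in the first coordinate -/
def zpt {n : ℕ} (hn : 1 ≤ n) (x : Rn n) (R : ℝ) : Rn n :=
  x + EuclideanSpace.single (⟨0, hn⟩ : Fin n) (2 * R)

lemma dist_zpt {n : ℕ} (hn : 1 ≤ n) (x : Rn n) {R : ℝ} (hR : 0 < R) :
    dist x (zpt hn x R) = 2 * R := by
  rw [zpt, dist_self_add_right, EuclideanSpace.norm_single, Real.norm_eq_abs,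
    abs_of_pos (by linarith)]

lemma ball_subset_zpt {n : ℕ} (hn : 1 ≤ n) (x : Rn n) {R r : ℝ} (hR : 0 < R)
    (hr : 3 * R ≤ r) : ball x R ⊆ ball (zpt hn x R) r := by
  intro y hy
  rw [mem_ball] at hy ⊢
  have h1 := dist_triangle y x (zpt hn x R)
  rw [dist_zpt hn x hR] at h1
  linarith

lemma zpt_ball_subset_compl {n : ℕ} (hn : 1 ≤ n) (x : Rn n) {R : ℝ} (hR : 0 < R) :
    ball (zpt hn x R) R ⊆ (ball x R)ᶜ := by
  intro y hy
  rw [mem_ball] at hy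
  simp only [mem_compl_iff, mem_ball, not_lt]
  have h1 := dist_triangle x y (zpt hn x R)
  rw [dist_zpt hn x hR] at h1
  have h2 : dist y (zpt hn x R) < R := hy
  rw [dist_comm]
  linarith

lemma zpt_edist_lt {n : ℕ} (hn : 1 ≤ n) (x : Rn n) {R r : ℝ} (hR : 0 < R) {y : Rn n}
    (hy : y ∈ ball (zpt hn x R) r) : edist x y ≤ ENNReal.ofReal (2 * R + r) := by
  rw [edist_dist]
  apply ENNReal.ofReal_le_ofReal
  have h1 := dist_triangle x (zpt hn x R) y
  rw [dist_zpt hn x hR] at h1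
  rw [mem_ball, dist_comm] at hy
  linarith
lemma factor_bound_int {n : ℕ} (hn : 1 ≤ n) {α r Cd : ℝ} (hα : 0 < α) (hr : 1 ≤ r)
    (hCd : 1 ≤ Cd) {g : Rn n → ℝ≥0∞}
    (hd : ∀ (x : Rn n) (R : ℝ), 0 < R →
      ∫⁻ y in ball x (2 * R), g y ^ r ≤ ENNReal.ofReal Cd * ∫⁻ y in ball x R, g y ^ r)
    (xB : Rn n) {R : ℝ} (hR : 0 < R) :
    (∫⁻ y in ball xB R, g y ^ r) ^ (1 / r) ≤
      ENNReal.ofReal (Cd * Cd * 3 ^ α) * ENNReal.ofReal R ^ α *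
        (∫⁻ y in (ball xB R)ᶜ, (g y * edist xB y ^ (-α)) ^ r) ^ (1 / r) := by
  have hr0 : (0:ℝ) < r := lt_of_lt_of_le one_pos hr
  set z : Rn n := zpt hn xB R with hz
  set I : ℝ≥0∞ := ∫⁻ y in (ball xB R)ᶜ, (g y * edist xB y ^ (-α)) ^ r with hI
  have h3R : ENNReal.ofReal (3 * R) ^ (α * r) ≠ ⊤ :=
    ENNReal.rpow_ne_top_of_nonneg (by positivity) ENNReal.ofReal_ne_top
  have step2 : ∫⁻ y in ball z R, g y ^ r ≤ ENNReal.ofReal (3 * R) ^ (α * r) * I := by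
    calc ∫⁻ y in ball z R, g y ^ r
        ≤ ∫⁻ y in ball z R, ENNReal.ofReal (3 * R) ^ (α * r) * (g y * edist xB y ^ (-α)) ^ r := by
          refine lintegral_mono_ae ?_
          filter_upwards [ae_restrict_mem measurableSet_ball] with y hy
          have hdy : edist xB y ≤ ENNReal.ofReal (3 * R) := by
            have := zpt_edist_lt hn xB hR hy
            rwa [show 2 * R + R = 3 * R by ring] at this
          have base : g y ≤ ENNReal.ofReal (3 * R) ^ α * (g y * edist xB y ^ (-α)) :=
            le_rpow_mul_self hα.le (by linarith) hdy (g y)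
          calc g y ^ r ≤ (ENNReal.ofReal (3 * R) ^ α * (g y * edist xB y ^ (-α))) ^ r :=
                ENNReal.rpow_le_rpow base hr0.le
            _ = ENNReal.ofReal (3 * R) ^ (α * r) * (g y * edist xB y ^ (-α)) ^ r := by
                rw [ENNReal.mul_rpow_of_nonneg _ _ hr0.le, ← ENNReal.rpow_mul]
      _ = ENNReal.ofReal (3 * R) ^ (α * r) * ∫⁻ y in ball z R, (g y * edist xB y ^ (-α)) ^ r :=
          lintegral_const_mul' _ _ h3R
      _ ≤ ENNReal.ofReal (3 * R) ^ (α * r) * I :=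
          mul_le_mul_right (lintegral_mono_set (zpt_ball_subset_compl hn xB hR)) _
  have comb : ∫⁻ y in ball xB R, g y ^ r ≤
      ENNReal.ofReal (Cd * Cd) * (ENNReal.ofReal (3 * R) ^ (α * r) * I) := by
    calc ∫⁻ y in ball xB R, g y ^ r
        ≤ ∫⁻ y in ball z (2 * (2 * R)), g y ^ r :=
          lintegral_mono_set (ball_subset_zpt hn xB hR (by linarith))
      _ ≤ ENNReal.ofReal Cd * ∫⁻ y in ball z (2 * R), g y ^ r := hd z (2 * R) (by linarith)
      _ ≤ ENNReal.ofReal Cd * (ENNReal.ofReal Cd * ∫⁻ y in ball z R, g y ^ r) :=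
          mul_le_mul_right (hd z R hR) _
      _ ≤ ENNReal.ofReal Cd * (ENNReal.ofReal Cd * (ENNReal.ofReal (3 * R) ^ (α * r) * I)) :=
          mul_le_mul_right (mul_le_mul_right step2 _) _
      _ = ENNReal.ofReal (Cd * Cd) * (ENNReal.ofReal (3 * R) ^ (α * r) * I) := by
          rw [← mul_assoc, ← ENNReal.ofReal_mul (by linarith : (0:ℝ) ≤ Cd)]
  have final := ENNReal.rpow_le_rpow comb (by positivity : (0:ℝ) ≤ 1 / r)
  rw [ENNReal.mul_rpow_of_nonneg _ _ (by positivity : (0:ℝ) ≤ 1 / r),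
    ENNReal.mul_rpow_of_nonneg _ _ (by positivity : (0:ℝ) ≤ 1 / r),
    ← ENNReal.rpow_mul (ENNReal.ofReal (3 * R)) (α * r) (1 / r),
    show α * r * (1 / r) = α by field_simp] at final
  refine le_trans final ?_
  have hc1 : ENNReal.ofReal (Cd * Cd) ^ (1 / r) ≤ ENNReal.ofReal (Cd * Cd) := by
    nth_rewrite 2 [show ENNReal.ofReal (Cd * Cd) = ENNReal.ofReal (Cd * Cd) ^ (1:ℝ) by
      rw [ENNReal.rpow_one]]
    refine ENNReal.rpow_le_rpow_of_exponent_le ?_ (by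
      rw [div_le_one hr0]; linarith)
    rw [show (1:ℝ≥0∞) = ENNReal.ofReal 1 by simp]
    exact ENNReal.ofReal_le_ofReal (by nlinarith)
  have hsplit : ENNReal.ofReal (3 * R) ^ α = ENNReal.ofReal (3 ^ α) * ENNReal.ofReal R ^ α := by
    rw [ENNReal.ofReal_mul (by norm_num : (0:ℝ) ≤ 3),
      ENNReal.mul_rpow_of_ne_zero (by simp) (by simp [hR]),
      ENNReal.ofReal_rpow_of_pos (by norm_num)]
  rw [hsplit]
  calc ENNReal.ofReal (Cd * Cd) ^ (1 / r) *
        (ENNReal.ofReal (3 ^ α) * ENNReal.ofReal R ^ α * I ^ (1 / r))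
      ≤ ENNReal.ofReal (Cd * Cd) * (ENNReal.ofReal (3 ^ α) * ENNReal.ofReal R ^ α * I ^ (1 / r)) :=
        mul_le_mul_left hc1 _
    _ = ENNReal.ofReal (Cd * Cd * 3 ^ α) * ENNReal.ofReal R ^ α * I ^ (1 / r) := by
        rw [ENNReal.ofReal_mul (show (0:ℝ) ≤ Cd * Cd by nlinarith)]
        ring
lemma factor_bound_sup {n : ℕ} (hn : 1 ≤ n) {α Crh : ℝ} (hα : 0 < α) (hCrh : 1 ≤ Crh)
    {u : Rn n → ℝ≥0∞}
    (hrh : ∀ (x : Rn n) (R : ℝ), 0 < R →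
      essSup u (volume.restrict (ball x R)) ≤
        ENNReal.ofReal Crh * ((volume (ball x R))⁻¹ * ∫⁻ y in ball x R, u y))
    (K : ℕ) (hK3 : 3 ≤ (K : ℝ)) (hKC : 2 * Crh ≤ (K : ℝ) ^ n)
    (xB : Rn n) {R : ℝ} (hR : 0 < R)
    (hfin : essSup u (volume.restrict (ball xB R)) ≠ ⊤) :
    essSup u (volume.restrict (ball xB R)) ≤
      ENNReal.ofReal (2 * Crh * ((K : ℝ) + 2) ^ α) * ENNReal.ofReal R ^ α *
        essSup (fun y => u y * edist xB y ^ (-α)) (volume.restrict (ball xB R)ᶜ) := by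
  set a := essSup u (volume.restrict (ball xB R)) with ha
  set G := essSup (fun y => u y * edist xB y ^ (-α)) (volume.restrict (ball xB R)ᶜ) with hG
  have hKpos : (0:ℝ) < K := by linarith
  rcases eq_or_ne G ⊤ with hGt | hGt
  · have hne1 : ENNReal.ofReal (2 * Crh * ((K : ℝ) + 2) ^ α) ≠ 0 := by
      rw [Ne, ENNReal.ofReal_eq_zero, not_le]
      positivity
    have hne2 : ENNReal.ofReal R ^ α ≠ 0 := by
      simp [ENNReal.rpow_eq_zero_iff, ENNReal.ofReal_ne_top, hR, ENNReal.ofReal_eq_zero,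
        not_le]
    rw [hGt, ENNReal.mul_top (mul_ne_zero hne1 hne2)]
    exact le_top
  -- main case
  set z : Rn n := zpt hn xB R with hz
  have hKR : 0 < (K : ℝ) * R := by positivity
  set Bb : Set (Rn n) := ball z ((K : ℝ) * R) with hBb
  have hsubB : ball xB R ⊆ Bb := ball_subset_zpt hn xB hR (by nlinarith)
  -- bound on the essSup over Bb \ B
  have hDbound : essSup u (volume.restrict (Bb \ ball xB R)) ≤
      ENNReal.ofReal (((K : ℝ) + 2) * R) ^ α * G := by
    refine essSup_le_of_ae_le _ ?_
    have h1 : ∀ᵐ y ∂(volume.restrict (Bb \ ball xB R)), u y * edist xB y ^ (-α) ≤ G :=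
      Filter.Eventually.filter_mono
        ((Measure.absolutelyContinuous_of_le
          (Measure.restrict_mono (fun y hy => hy.2) le_rfl)).ae_le)
        (ENNReal.ae_le_essSup _)
    filter_upwards [h1, ae_restrict_mem (measurableSet_ball.diff measurableSet_ball)]
      with y hy hmem
    have hd2 : edist xB y ≤ ENNReal.ofReal (((K : ℝ) + 2) * R) := by
      have := zpt_edist_lt hn xB hR hmem.1
      rwa [show 2 * R + (K : ℝ) * R = ((K : ℝ) + 2) * R by ring] at this
    have hd0 : edist xB y ≠ 0 := by
      have h3 : R ≤ dist y xB := not_lt.mp (fun hc => hmem.2 (mem_ball.mpr hc))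
      rw [edist_dist, Ne, ENNReal.ofReal_eq_zero, not_le, dist_comm]
      linarith
    exact rpow_cancel_le hα.le (by positivity) hd0 hd2 hy
  -- volumes
  set V1 := volume (ball (0 : Rn n) 1) with hV1
  have hV10 : V1 ≠ 0 := (measure_ball_pos _ _ one_pos).ne'
  have hV1t : V1 ≠ ⊤ := measure_ball_lt_top.ne
  set VB := volume (ball xB R) with hVB
  set Vb := volume Bb with hVb
  have hVb0 : Vb ≠ 0 := (measure_ball_pos _ _ hKR).ne'
  have hVbt : Vb ≠ ⊤ := measure_ball_lt_top.ne
  -- half estimate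
  have hhalf : ENNReal.ofReal Crh * VB * Vb⁻¹ ≤ ENNReal.ofReal (1/2) := by
    have h1 : ENNReal.ofReal Crh * VB ≤ ENNReal.ofReal (1/2) * Vb := by
      rw [hVB, hVb, hBb, vol_ball_nat hn xB hR.le, vol_ball_nat hn z hKR.le,
        ← mul_assoc, ← mul_assoc, ← ENNReal.ofReal_mul (by linarith),
        ← ENNReal.ofReal_mul (by norm_num)]
      refine mul_le_mul_left (ENNReal.ofReal_le_ofReal ?_) _
      rw [mul_pow]
      have hRn : (0:ℝ) ≤ R ^ n := by positivity
      nlinarith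
    calc ENNReal.ofReal Crh * VB * Vb⁻¹ ≤ ENNReal.ofReal (1/2) * Vb * Vb⁻¹ :=
          mul_le_mul_left h1 _
      _ = ENNReal.ofReal (1/2) := by
          rw [mul_assoc, ENNReal.mul_inv_cancel hVb0 hVbt, mul_one]
  -- absorption inequality
  set D2 : ℝ≥0∞ := ENNReal.ofReal (((K : ℝ) + 2) * R) ^ α * G with hD2
  have hD2t : D2 ≠ ⊤ := by
    refine ENNReal.mul_ne_top ?_ hGt
    exact ENNReal.rpow_ne_top_of_nonneg hα.le ENNReal.ofReal_ne_top
  have habs : a ≤ ENNReal.ofReal (1/2) * a + ENNReal.ofReal Crh * D2 := by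
    have hchain : a ≤ ENNReal.ofReal Crh * (Vb⁻¹ * ∫⁻ y in Bb, u y) := by
      refine le_trans ?_ (hrh z ((K : ℝ) * R) hKR)
      exact essSup_mono_measure
        (Measure.absolutelyContinuous_of_le (Measure.restrict_mono hsubB le_rfl))
    have hsplit : ∫⁻ y in Bb, u y ≤ a * VB + D2 * Vb := by
      calc ∫⁻ y in Bb, u y ≤ ∫⁻ y in (ball xB R) ∪ (Bb \ ball xB R), u y := by
            refine lintegral_mono_set ?_
            intro y hy
            by_cases h : y ∈ ball xB R
            · exact Or.inl h
            · exact Or.inr ⟨hy, h⟩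
        _ ≤ (∫⁻ y in ball xB R, u y) + ∫⁻ y in Bb \ ball xB R, u y :=
            lintegral_union_le _ _ _
        _ ≤ a * VB + D2 * Vb := by
            refine add_le_add (setLIntegral_le_essSup_mul u _) ?_
            calc ∫⁻ y in Bb \ ball xB R, u y
                ≤ essSup u (volume.restrict (Bb \ ball xB R)) * volume (Bb \ ball xB R) :=
                  setLIntegral_le_essSup_mul u _
              _ ≤ D2 * Vb := mul_le_mul' hDbound (measure_mono diff_subset)
    calc a ≤ ENNReal.ofReal Crh * (Vb⁻¹ * ∫⁻ y in Bb, u y) := hchain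
      _ ≤ ENNReal.ofReal Crh * (Vb⁻¹ * (a * VB + D2 * Vb)) := by gcongr
      _ = (ENNReal.ofReal Crh * VB * Vb⁻¹) * a + (Vb * Vb⁻¹) * (ENNReal.ofReal Crh * D2) := by
          ring
      _ ≤ ENNReal.ofReal (1/2) * a + (Vb * Vb⁻¹) * (ENNReal.ofReal Crh * D2) :=
          add_le_add_left (mul_le_mul_left hhalf a) _
      _ = ENNReal.ofReal (1/2) * a + ENNReal.ofReal Crh * D2 := by
          rw [ENNReal.mul_inv_cancel hVb0 hVbt, one_mul]
  -- from absorption to conclusion, via toReal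
  have hC2t : ENNReal.ofReal Crh * D2 ≠ ⊤ := ENNReal.mul_ne_top ENNReal.ofReal_ne_top hD2t
  have hRHSt : ENNReal.ofReal (1/2) * a + ENNReal.ofReal Crh * D2 ≠ ⊤ :=
    ENNReal.add_ne_top.mpr ⟨ENNReal.mul_ne_top ENNReal.ofReal_ne_top hfin, hC2t⟩
  have htr := (ENNReal.toReal_le_toReal hfin hRHSt).mpr habs
  rw [ENNReal.toReal_add (ENNReal.mul_ne_top ENNReal.ofReal_ne_top hfin) hC2t,
    ENNReal.toReal_mul, ENNReal.toReal_ofReal (by norm_num : (0:ℝ) ≤ 1/2)] at htr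
  have htr2 : a.toReal ≤ 2 * (ENNReal.ofReal Crh * D2).toReal := by linarith
  have hfinal : a ≤ ENNReal.ofReal 2 * (ENNReal.ofReal Crh * D2) := by
    calc a = ENNReal.ofReal a.toReal := (ENNReal.ofReal_toReal hfin).symm
      _ ≤ ENNReal.ofReal (2 * (ENNReal.ofReal Crh * D2).toReal) :=
          ENNReal.ofReal_le_ofReal htr2
      _ = ENNReal.ofReal 2 * ENNReal.ofReal (ENNReal.ofReal Crh * D2).toReal := by
          rw [ENNReal.ofReal_mul (by norm_num)]
      _ = ENNReal.ofReal 2 * (ENNReal.ofReal Crh * D2) := by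
          rw [ENNReal.ofReal_toReal hC2t]
  refine le_trans hfinal (le_of_eq ?_)
  -- rearrange constants
  rw [hD2]
  have hsplit2 : ENNReal.ofReal (((K : ℝ) + 2) * R) ^ α =
      ENNReal.ofReal (((K : ℝ) + 2) ^ α) * ENNReal.ofReal R ^ α := by
    rw [ENNReal.ofReal_mul (by positivity),
      ENNReal.mul_rpow_of_ne_zero (by simp [ENNReal.ofReal_eq_zero]; positivity)
        (by simp [ENNReal.ofReal_eq_zero]; linarith),
      ENNReal.ofReal_rpow_of_pos (by positivity)]
  rw [hsplit2]
  have hcc : ENNReal.ofReal (2 * Crh * ((K : ℝ) + 2) ^ α) =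
      ENNReal.ofReal 2 * ENNReal.ofReal Crh * ENNReal.ofReal (((K : ℝ) + 2) ^ α) := by
    rw [ENNReal.ofReal_mul (by positivity), ENNReal.ofReal_mul (by norm_num)]
  rw [hcc]
  ring
lemma measurable_gk {n : ℕ} {vk : Rn n → ℝ≥0∞} (hvk : Measurable vk) (c' : Rn n) (β : ℝ) :
    Measurable fun y => (vk y)⁻¹ * edist c' y ^ β := by
  refine (hvk.inv).mul ?_
  exact ((continuous_const.edist continuous_id).measurable).pow_const _

lemma essSup_inv_ne_top {n m : ℕ} (hn : 1 ≤ n) (hm : 1 ≤ m) (γv : Fin m → ℝ)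
    (hγv : ∀ i, 0 < γv i ∧ γv i < n) (δ : ℝ) (p : Fin m → ℝ≥0∞) (hp : ∀ i, 1 ≤ p i)
    (w : Rn n → ℝ≥0∞) (v : Fin m → Rn n → ℝ≥0∞) (hw : IsWeight w)
    (hv : ∀ i, IsWeight (v i)) (hglob : GlobalCond m γv δ p w v)
    (i : Fin m) (hpi : p i = 1) (x : Rn n) {R : ℝ} (hR : 0 < R) :
    essSup (fun y => (v i y)⁻¹) (volume.restrict (ball x R)) ≠ ⊤ := by
  classical
  intro htop
  obtain ⟨Cg, hCg, hg⟩ := hglob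
  set u : Rn n → ℝ≥0∞ := fun y => (v i y)⁻¹ with hu
  have humeas : Measurable u := ((hv i).1).inv
  have hm0 : (0:ℝ) < (m:ℝ) := by exact_mod_cast hm
  -- Step 1: find a singular point in the closed ball
  have hsing : ∃ x₀ ∈ closedBall x R, ∀ ρ : ℝ, 0 < ρ →
      essSup u (volume.restrict (ball x₀ ρ)) = ⊤ := by
    by_contra hno
    push_neg at hno
    choose! ρ hρpos hρfin using fun x₀ (hx₀ : x₀ ∈ closedBall x R) => hno x₀ hx₀
    obtain ⟨t, htmem, ht⟩ := (isCompact_closedBall x R).elim_nhds_subcover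
      (fun y => ball y (ρ y)) (fun y hy => ball_mem_nhds _ (hρpos y hy))
    set M : ℝ≥0∞ := ∑ y ∈ t, essSup u (volume.restrict (ball y (ρ y)))
    have hM : M ≠ ⊤ :=
      (ENNReal.sum_lt_top.mpr fun y hy => lt_top_iff_ne_top.mpr (hρfin y (htmem y hy))).ne
    set bad : Set (Rn n) := {yy | ¬ u yy ≤ M} with hbad
    have hbadm : MeasurableSet bad := by
      have : bad = {yy | M < u yy} := by
        ext yy; simp [hbad, not_le]
      rw [this]
      exact measurableSet_lt measurable_const humeas
    have hz0 : ∀ y ∈ t, volume (bad ∩ ball y (ρ y)) = 0 := by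
      intro y hyt
      have h2 : ∀ᵐ zz ∂(volume.restrict (ball y (ρ y))), u zz ≤ M :=
        (ENNReal.ae_le_essSup u).mono fun zz hzz =>
          hzz.trans (Finset.single_le_sum (f := fun y => essSup u (volume.restrict (ball y (ρ y)))) (fun _ _ => zero_le) hyt)
      have h3 := ae_iff.mp h2
      rwa [Measure.restrict_apply hbadm] at h3
    have hsub : bad ∩ ball x R ⊆ ⋃ y ∈ t, bad ∩ ball y (ρ y) := by
      intro zz hz
      have hz2 : zz ∈ ⋃ y ∈ t, ball y (ρ y) :=
        ht (ball_subset_closedBall hz.2)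
      simp only [mem_iUnion] at hz2 ⊢
      obtain ⟨y, hy1, hy2⟩ := hz2
      exact ⟨y, hy1, hz.1, hy2⟩
    have hzero : volume (bad ∩ ball x R) = 0 := by
      refine le_antisymm ?_ (zero_le)
      calc volume (bad ∩ ball x R)
          ≤ volume (⋃ y ∈ t, bad ∩ ball y (ρ y)) := measure_mono hsub
        _ ≤ ∑ y ∈ t, volume (bad ∩ ball y (ρ y)) :=
            measure_biUnion_finset_le _ _
        _ = 0 := Finset.sum_eq_zero hz0
    have hae : ∀ᵐ yy ∂(volume.restrict (ball x R)), u yy ≤ M := by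
      rw [ae_iff, Measure.restrict_apply hbadm]
      exact hzero
    exact absurd htop (by
      have := essSup_le_of_ae_le M hae
      exact (lt_of_le_of_lt this (lt_top_iff_ne_top.mpr hM)).ne)
  obtain ⟨x₀, hx₀mem, hx₀⟩ := hsing
  -- Step 2: contradiction with the global condition at the ball B(c', R)
  set c' : Rn n := zpt hn x₀ R with hc'
  set αi : ℝ := (n:ℝ) - γv i + 1/(m:ℝ) with hαi
  have hαpos : 0 < αi := by
    have := (hγv i).2
    have h1 : 0 < 1/(m:ℝ) := by positivity
    rw [hαi]; linarith
  have hsubc : ball x₀ R ⊆ (ball c' R)ᶜ := by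
    intro y hy
    rw [mem_ball] at hy
    simp only [mem_compl_iff, mem_ball, not_lt]
    have h1 := dist_triangle x₀ y c'
    rw [dist_zpt hn x₀ hR] at h1
    rw [dist_comm x₀ y] at h1
    linarith
  -- the i-th global factor is infinite
  have hGtop : essSup (fun y => (v i y)⁻¹ * edist c' y ^ (-αi))
      (volume.restrict (ball c' R)ᶜ) = ⊤ := by
    by_contra hG
    set G₀ := essSup (fun y => (v i y)⁻¹ * edist c' y ^ (-αi))
      (volume.restrict (ball c' R)ᶜ) with hG₀
    have h1 : ∀ᵐ y ∂(volume.restrict (ball x₀ R)), u y * edist c' y ^ (-αi) ≤ G₀ :=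
      Filter.Eventually.filter_mono
        ((Measure.absolutelyContinuous_of_le (Measure.restrict_mono hsubc le_rfl)).ae_le)
        (ENNReal.ae_le_essSup _)
    have h2 : ∀ᵐ y ∂(volume.restrict (ball x₀ R)), u y ≤ ENNReal.ofReal (3*R) ^ αi * G₀ := by
      filter_upwards [h1, ae_restrict_mem measurableSet_ball] with y hy hmem
      have hd2 : edist c' y ≤ ENNReal.ofReal (3 * R) := by
        rw [edist_dist]
        apply ENNReal.ofReal_le_ofReal
        have h3 := dist_triangle c' x₀ y
        rw [dist_comm c' x₀, dist_zpt hn x₀ hR] at h3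
        rw [mem_ball, dist_comm] at hmem
        linarith
      have hd0 : edist c' y ≠ 0 := by
        have h4 : R ≤ dist y c' := not_lt.mp (fun hcc => (hsubc hmem) (mem_ball.mpr hcc))
        rw [edist_dist, Ne, ENNReal.ofReal_eq_zero, not_le, dist_comm]
        linarith
      exact rpow_cancel_le hαpos.le (by linarith) hd0 hd2 hy
    have h3 := essSup_le_of_ae_le _ h2
    have h4 : essSup u (volume.restrict (ball x₀ R)) ≠ ⊤ := by
      refine ne_top_of_le_ne_top ?_ h3
      exact ENNReal.mul_ne_top (ENNReal.rpow_ne_top_of_nonneg hαpos.le ENNReal.ofReal_ne_top) hG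
    exact h4 (hx₀ R hR)
  -- all global factors are nonzero
  have hpos : ∀ j : Fin m, lpOn (conjE (p j))
      (fun y => (v j y)⁻¹ * edist c' y ^ (-((n:ℝ) - γv j + 1/(m:ℝ)))) (ball c' R)ᶜ ≠ 0 := by
    intro j
    set gj : Rn n → ℝ≥0∞ :=
      fun y => (v j y)⁻¹ * edist c' y ^ (-((n:ℝ) - γv j + 1/(m:ℝ))) with hgj
    have hgjm : Measurable gj := measurable_gk (hv j).1 c' _
    have hgj_pos : ∀ᵐ y ∂(volume : Measure (Rn n)), 0 < gj y := by
      filter_upwards [(hv j).2.1] with y hy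
      have h1 : (v j y)⁻¹ ≠ 0 := by
        simp only [Ne, ENNReal.inv_eq_zero]
        exact hy.2.ne
      have h2 : edist c' y ^ (-((n:ℝ) - γv j + 1/(m:ℝ))) ≠ 0 := by
        intro h0
        have hαj : 0 < (n:ℝ) - γv j + 1/(m:ℝ) := by
          have h5 := (hγv j).2
          have h6 : (0:ℝ) < 1/(m:ℝ) := by positivity
          linarith
        rcases ENNReal.rpow_eq_zero_iff.mp h0 with ⟨_, h7⟩ | ⟨h7, _⟩
        · linarith
        · exact (edist_ne_top c' y) h7
      exact pos_iff_ne_zero.mpr (mul_ne_zero h1 h2)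
    set z' : Rn n := zpt hn c' R with hz'
    have hsub' : ball z' R ⊆ (ball c' R)ᶜ := zpt_ball_subset_compl hn c' hR
    have hballpos : volume (ball z' R) ≠ 0 := (measure_ball_pos volume z' hR).ne'
    rw [lpOn]
    split_ifs with hq
    · intro h0
      have hle : essSup gj (volume.restrict (ball z' R)) ≤
          essSup gj (volume.restrict (ball c' R)ᶜ) :=
        essSup_mono_measure (Measure.absolutelyContinuous_of_le (Measure.restrict_mono hsub' le_rfl))
      rw [h0] at hle
      exact essSup_pos_of_ae_pos hgj_pos hballpos (le_antisymm hle (zero_le))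
    · intro h0
      have hpj1 : p j ≠ 1 := by
        intro hpj
        exact hq (by simp [conjE, hpj])
      have hr1 : 1 ≤ (conjE (p j)).toReal := conjE_toReal_ge_one (hp j) hpj1
      have hr0 : 0 < (conjE (p j)).toReal := lt_of_lt_of_le one_pos hr1
      rw [ENNReal.rpow_eq_zero_iff] at h0
      rcases h0 with ⟨h0, _⟩ | ⟨_, h0⟩
      · -- the integral is zero, contradiction
        have hpos2 : ∀ᵐ y ∂(volume : Measure (Rn n)), 0 < gj y ^ (conjE (p j)).toReal := by
          filter_upwards [hgj_pos] with y hy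
          rcases eq_or_ne (gj y) ⊤ with hgt | hgt
          · rw [hgt]; simp [ENNReal.top_rpow_of_pos hr0]
          · exact ENNReal.rpow_pos hy hgt
        have := setLIntegral_pos (hgjm.pow_const _) hpos2 hballpos
        exact this (le_antisymm (h0 ▸ lintegral_mono_set hsub') (zero_le))
      · -- exponent negative, contradiction
        have : 0 < 1 / (conjE (p j)).toReal := by positivity
        linarith
  -- assemble the contradiction
  have hlpOn_i : lpOn (conjE (p i))
      (fun y => (v i y)⁻¹ * edist c' y ^ (-((n:ℝ) - γv i + 1/(m:ℝ)))) (ball c' R)ᶜ = ⊤ := by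
    rw [show conjE (p i) = ⊤ by simp [conjE, hpi], lpOn, if_pos rfl]
    exact hGtop
  have hprod : (∏ j, lpOn (conjE (p j))
      (fun y => (v j y)⁻¹ * edist c' y ^ (-((n:ℝ) - γv j + 1/(m:ℝ)))) (ball c' R)ᶜ) = ⊤ := by
    rw [← Finset.mul_prod_erase Finset.univ _ (Finset.mem_univ i)]
    rw [ENNReal.mul_eq_top]
    exact Or.inr ⟨hlpOn_i, Finset.prod_ne_zero_iff.mpr fun j _ => hpos j⟩
  have hS' : essSup w (volume.restrict (ball c' R)) ≠ 0 :=
    essSup_pos_of_ae_pos (hw.2.1.mono fun y hy => hy.1) (measure_ball_pos volume c' hR).ne'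
  have hV' : volume (ball c' R) ^ (-((δ-1)/(n:ℝ))) ≠ 0 := by
    simp [ENNReal.rpow_eq_zero_iff, (measure_ball_pos volume c' hR).ne',
      measure_ball_lt_top.ne]
  have hLHS := hg c' R hR
  rw [hprod, ENNReal.mul_top (mul_ne_zero hS' hV')] at hLHS
  exact ENNReal.ofReal_ne_top (top_le_iff.mp hLHS)
lemma per_factor {n m : ℕ} (hn : 1 ≤ n) (hm : 1 ≤ m) (γv : Fin m → ℝ)
    (hγv : ∀ i, 0 < γv i ∧ γv i < n) (δ : ℝ) (p : Fin m → ℝ≥0∞) (hp : ∀ i, 1 ≤ p i)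
    (w : Rn n → ℝ≥0∞) (v : Fin m → Rn n → ℝ≥0∞) (hw : IsWeight w)
    (hv : ∀ i, IsWeight (v i))
    (hRHinf : ∀ i, p i = 1 → memRHinf fun y => (v i y)⁻¹)
    (hdbl : ∀ i, p i ≠ 1 → IsDoubling fun y => (v i y)⁻¹ ^ (conjE (p i)).toReal)
    (hglob : GlobalCond m γv δ p w v) (i : Fin m) :
    ∃ K : ℝ, 0 < K ∧ ∀ (xB : Rn n) (R : ℝ), 0 < R →
      lpOn (conjE (p i)) (fun y => (v i y)⁻¹) (ball xB R) ≤
        ENNReal.ofReal K * ENNReal.ofReal R ^ ((n:ℝ) - γv i + 1/(m:ℝ)) *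
          lpOn (conjE (p i))
            (fun y => (v i y)⁻¹ * edist xB y ^ (-((n:ℝ) - γv i + 1/(m:ℝ)))) (ball xB R)ᶜ := by
  have hm0 : (0:ℝ) < (m:ℝ) := by exact_mod_cast hm
  set α : ℝ := (n:ℝ) - γv i + 1/(m:ℝ) with hα
  have hαpos : 0 < α := by
    have := (hγv i).2
    have h1 : 0 < 1/(m:ℝ) := by positivity
    rw [hα]; linarith
  by_cases hpi : p i = 1
  · -- essential supremum case, via RH∞
    obtain ⟨Crh₀, hCrh₀, hrh₀⟩ := hRHinf i hpi
    set Crh : ℝ := max Crh₀ 1 with hCrh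
    have hCrh1 : 1 ≤ Crh := le_max_right _ _
    have hrh : ∀ (x : Rn n) (R : ℝ), 0 < R →
        essSup (fun y => (v i y)⁻¹) (volume.restrict (ball x R)) ≤
          ENNReal.ofReal Crh * ((volume (ball x R))⁻¹ * ∫⁻ y in ball x R, (v i y)⁻¹) :=
      fun x R hR => (hrh₀ x R hR).trans
        (mul_le_mul_left (ENNReal.ofReal_le_ofReal (le_max_left _ _)) _)
    set K : ℕ := max 3 ⌈2 * Crh⌉₊ with hK
    have hK3 : 3 ≤ (K : ℝ) := by
      have : (3:ℕ) ≤ K := le_max_left _ _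
      exact_mod_cast this
    have hKC : 2 * Crh ≤ (K : ℝ) ^ n := by
      have h1 : 2 * Crh ≤ (⌈2 * Crh⌉₊ : ℝ) := Nat.le_ceil _
      have h2 : ((⌈2 * Crh⌉₊ : ℕ) : ℝ) ≤ (K : ℝ) := by
        exact_mod_cast (le_max_right 3 ⌈2 * Crh⌉₊)
      have h3 : (K : ℝ) ≤ (K : ℝ) ^ n :=
        le_self_pow₀ (by linarith) (by omega)
      linarith
    refine ⟨2 * Crh * ((K : ℝ) + 2) ^ α, by positivity, fun xB R hR => ?_⟩
    have hconj : conjE (p i) = ⊤ := by simp [conjE, hpi]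
    rw [hconj, lpOn, if_pos rfl, lpOn, if_pos rfl]
    exact factor_bound_sup hn hαpos hCrh1 hrh K hK3 hKC xB hR
      (essSup_inv_ne_top hn hm γv hγv δ p hp w v hw hv hglob i hpi xB hR)
  · -- integral case, via doubling
    have hconj_ne : conjE (p i) ≠ ⊤ := conjE_ne_top (hp i) hpi
    have hr1 : 1 ≤ (conjE (p i)).toReal := conjE_toReal_ge_one (hp i) hpi
    obtain ⟨Cd₀, hCd₀, hd₀⟩ := hdbl i hpi
    set Cd : ℝ := max Cd₀ 1 with hCd
    have hCd1 : 1 ≤ Cd := le_max_right _ _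
    have hd : ∀ (x : Rn n) (R : ℝ), 0 < R →
        ∫⁻ y in ball x (2 * R), (v i y)⁻¹ ^ (conjE (p i)).toReal ≤
          ENNReal.ofReal Cd * ∫⁻ y in ball x R, (v i y)⁻¹ ^ (conjE (p i)).toReal :=
      fun x R hR => (hd₀ x R hR).trans
        (mul_le_mul_left (ENNReal.ofReal_le_ofReal (le_max_left _ _)) _)
    refine ⟨Cd * Cd * 3 ^ α, by positivity, fun xB R hR => ?_⟩
    rw [lpOn, if_neg hconj_ne, lpOn, if_neg hconj_ne]
    exact factor_bound_int hn hαpos hr1 hCd1 hd xB hR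
end St7

/-- under `RH_∞` on `v_i⁻¹` for `i ∈ I₁` and doubling of
`v_i^{-p_i'}` for `i ∈ I₂`, the global condition implies the local condition. -/
theorem statement7 {n m : ℕ} (hn : 1 ≤ n) (hm : 1 ≤ m) (γ : ℝ) (hγ0 : 0 < γ)
    (hγ : γ < m * n) (γv : Fin m → ℝ) (hγv : ∀ i, 0 < γv i ∧ γv i < n)
    (hγsum : ∑ i, γv i = γ) (δ : ℝ) (p : Fin m → ℝ≥0∞) (hp : ∀ i, 1 ≤ p i)
    (w : Rn n → ℝ≥0∞) (v : Fin m → Rn n → ℝ≥0∞) (hw : IsWeight w)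
    (hv : ∀ i, IsWeight (v i))
    (hRHinf : ∀ i, p i = 1 → memRHinf fun y => (v i y)⁻¹)
    (hdbl : ∀ i, p i ≠ 1 → IsDoubling fun y => (v i y)⁻¹ ^ (conjE (p i)).toReal)
    (hglob : GlobalCond m γv δ p w v) :
    LocalCond m γ δ p w v := by
  classical
  have hn0 : (0:ℝ) < (n:ℝ) := by
    have : (1:ℝ) ≤ (n:ℝ) := by exact_mod_cast hn
    linarith
  have hm0 : (0:ℝ) < (m:ℝ) := by
    have : (1:ℝ) ≤ (m:ℝ) := by exact_mod_cast hm
    linarith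
  choose K hKpos hK using fun i =>
    St7.per_factor hn hm γv hγv δ p hp w v hw hv hRHinf hdbl hglob i
  obtain ⟨Cg, hCg, hg⟩ := hglob
  set V₁ : ℝ≥0∞ := volume (ball (0 : Rn n) 1) with hV₁
  have hV₁0 : V₁ ≠ 0 := (measure_ball_pos _ _ one_pos).ne'
  have hV₁t : V₁ ≠ ⊤ := measure_ball_lt_top.ne
  set A : ℝ := -(δ/(n:ℝ)) + γ/(n:ℝ) - ∑ i, ((p i)⁻¹).toReal with hA
  set B : ℝ := ∑ i, ((conjE (p i))⁻¹).toReal with hB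
  set c : ℝ := A - B + (δ-1)/(n:ℝ) with hc
  have hV₁c0 : V₁ ^ c ≠ 0 := by simp [ENNReal.rpow_eq_zero_iff, hV₁0, hV₁t]
  have hV₁ct : V₁ ^ c ≠ ⊤ := by simp [ENNReal.rpow_eq_top_iff, hV₁0, hV₁t]
  have hKprod : 0 < ∏ i, K i := Finset.prod_pos fun i _ => hKpos i
  have hV₁cR : 0 < (V₁ ^ c).toReal := ENNReal.toReal_pos hV₁c0 hV₁ct
  -- sums of exponents
  have hsum1 : (∑ i : Fin m, ((n:ℝ) - γv i + 1/(m:ℝ))) = (m:ℝ)*(n:ℝ) - γ + 1 := by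
    rw [Finset.sum_add_distrib, Finset.sum_sub_distrib, Finset.sum_const, Finset.sum_const,
      Finset.card_univ, Fintype.card_fin, hγsum, nsmul_eq_mul, nsmul_eq_mul]
    field_simp
  have hsum2 : B = (m:ℝ) - ∑ i, ((p i)⁻¹).toReal := by
    have h1 : ∑ i : Fin m, (((conjE (p i))⁻¹).toReal + ((p i)⁻¹).toReal) = (m:ℝ) := by
      rw [Finset.sum_congr rfl fun i _ => St7.conjE_inv_toReal_add (hp i)]
      simp
    rw [Finset.sum_add_distrib] at h1
    rw [hB]; linarith
  have hnc : (n:ℝ) * c + ((m:ℝ)*(n:ℝ) - γ + 1) = 0 := by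
    rw [hc, hA, hsum2]
    field_simp
    ring
  refine ⟨(∏ i, K i) * (V₁ ^ c).toReal * Cg, by positivity, fun xB R hR => ?_⟩
  set V : ℝ≥0∞ := volume (ball xB R) with hV
  have hV0 : V ≠ 0 := (measure_ball_pos _ _ hR).ne'
  have hVt : V ≠ ⊤ := measure_ball_lt_top.ne
  have heR0 : ENNReal.ofReal R ≠ 0 := (ENNReal.ofReal_pos.mpr hR).ne'
  have heRt : ENNReal.ofReal R ≠ ⊤ := ENNReal.ofReal_ne_top
  set S : ℝ≥0∞ := essSup w (volume.restrict (ball xB R)) with hS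
  -- step 1 : apply the per-factor bounds
  have hstep1 : ∏ i, (V ^ (-(((conjE (p i))⁻¹).toReal)) *
        lpOn (conjE (p i)) (fun y => (v i y)⁻¹) (ball xB R)) ≤
      ∏ i, (V ^ (-(((conjE (p i))⁻¹).toReal)) *
        (ENNReal.ofReal (K i) * ENNReal.ofReal R ^ ((n:ℝ) - γv i + 1/(m:ℝ)) *
          lpOn (conjE (p i))
            (fun y => (v i y)⁻¹ * edist xB y ^ (-((n:ℝ) - γv i + 1/(m:ℝ)))) (ball xB R)ᶜ)) :=
    Finset.prod_le_prod' fun i _ => mul_le_mul_right (hK i xB R hR) _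
  -- step 2 : rearrange the right-hand side product
  have hstep2 : ∏ i, (V ^ (-(((conjE (p i))⁻¹).toReal)) *
        (ENNReal.ofReal (K i) * ENNReal.ofReal R ^ ((n:ℝ) - γv i + 1/(m:ℝ)) *
          lpOn (conjE (p i))
            (fun y => (v i y)⁻¹ * edist xB y ^ (-((n:ℝ) - γv i + 1/(m:ℝ)))) (ball xB R)ᶜ)) =
      V ^ (-B) * (ENNReal.ofReal (∏ i, K i) *
        (ENNReal.ofReal R ^ ((m:ℝ)*(n:ℝ) - γ + 1) *
          ∏ i, lpOn (conjE (p i))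
            (fun y => (v i y)⁻¹ * edist xB y ^ (-((n:ℝ) - γv i + 1/(m:ℝ)))) (ball xB R)ᶜ)) := by
    simp only [Finset.prod_mul_distrib]
    rw [St7.prod_rpow_fin _ _ hV0 hVt, St7.prod_rpow_fin _ _ heR0 heRt,
      ← ENNReal.ofReal_prod_of_nonneg (fun i _ => (hKpos i).le), hsum1,
      show (∑ i : Fin m, -(((conjE (p i))⁻¹).toReal)) = -B by rw [hB, Finset.sum_neg_distrib]]
    ring
  -- the V-power identity
  have hVe : V = ENNReal.ofReal R ^ (n:ℝ) * V₁ := St7.vol_ball_rpow hn xB hR.le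
  have hVpow : V ^ c * ENNReal.ofReal R ^ ((m:ℝ)*(n:ℝ) - γ + 1) = V₁ ^ c := by
    rw [hVe, ENNReal.mul_rpow_of_ne_zero (by simp [ENNReal.rpow_eq_zero_iff, heR0, heRt]) hV₁0,
      ← ENNReal.rpow_mul]
    calc ENNReal.ofReal R ^ ((n:ℝ) * c) * V₁ ^ c * ENNReal.ofReal R ^ ((m:ℝ)*(n:ℝ) - γ + 1)
        = V₁ ^ c * (ENNReal.ofReal R ^ ((n:ℝ) * c) *
            ENNReal.ofReal R ^ ((m:ℝ)*(n:ℝ) - γ + 1)) := by ring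
      _ = V₁ ^ c := by
          rw [← ENNReal.rpow_add _ _ heR0 heRt, hnc, ENNReal.rpow_zero, mul_one]
  -- the splitting of V ^ A * V ^ (-B)
  have e1 : V ^ A * V ^ (-B) = V ^ c * V ^ (-((δ-1)/(n:ℝ))) := by
    rw [← ENNReal.rpow_add _ _ hV0 hVt, ← ENNReal.rpow_add _ _ hV0 hVt]
    congr 1
    rw [hc]; ring
  -- main chain
  calc S * V ^ A * ∏ i, (V ^ (-(((conjE (p i))⁻¹).toReal)) *
        lpOn (conjE (p i)) (fun y => (v i y)⁻¹) (ball xB R))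
      ≤ S * V ^ A * (V ^ (-B) * (ENNReal.ofReal (∏ i, K i) *
          (ENNReal.ofReal R ^ ((m:ℝ)*(n:ℝ) - γ + 1) *
            ∏ i, lpOn (conjE (p i))
              (fun y => (v i y)⁻¹ * edist xB y ^ (-((n:ℝ) - γv i + 1/(m:ℝ)))) (ball xB R)ᶜ))) := by
        refine mul_le_mul_right (hstep1.trans_eq hstep2) _
    _ = ENNReal.ofReal (∏ i, K i) * ((V ^ c * ENNReal.ofReal R ^ ((m:ℝ)*(n:ℝ) - γ + 1)) *
          (S * V ^ (-((δ-1)/(n:ℝ))) *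
            ∏ i, lpOn (conjE (p i))
              (fun y => (v i y)⁻¹ * edist xB y ^ (-((n:ℝ) - γv i + 1/(m:ℝ)))) (ball xB R)ᶜ)) := by
        rw [show S * V ^ A * (V ^ (-B) * (ENNReal.ofReal (∏ i, K i) *
            (ENNReal.ofReal R ^ ((m:ℝ)*(n:ℝ) - γ + 1) *
              ∏ i, lpOn (conjE (p i))
                (fun y => (v i y)⁻¹ * edist xB y ^ (-((n:ℝ) - γv i + 1/(m:ℝ)))) (ball xB R)ᶜ))) =
          (V ^ A * V ^ (-B)) * (ENNReal.ofReal (∏ i, K i) *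
            (ENNReal.ofReal R ^ ((m:ℝ)*(n:ℝ) - γ + 1) *
              (S * ∏ i, lpOn (conjE (p i))
                (fun y => (v i y)⁻¹ * edist xB y ^ (-((n:ℝ) - γv i + 1/(m:ℝ)))) (ball xB R)ᶜ)))
          from by ring, e1]
        ring
    _ ≤ ENNReal.ofReal (∏ i, K i) * (V₁ ^ c * ENNReal.ofReal Cg) := by
        rw [hVpow]
        exact mul_le_mul_right (mul_le_mul_right (hg xB R hR) _) _
    _ = ENNReal.ofReal ((∏ i, K i) * (V₁ ^ c).toReal * Cg) := by
        rw [ENNReal.ofReal_mul (by positivity), ENNReal.ofReal_mul (by positivity),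
          ENNReal.ofReal_toReal hV₁ct]
        ring
end
end

section
/- Let n, m ≥ 1 and 0 < γ < mn. There exists a positive constant C = C(n) such that for every ball B = B(x_B,R) in ℝ^n, every x ∈ C_1, every z ∈ C_2, and all y_1,…,y_m ∈ A, one has (Σ_{j=1}^m |x-y_j|)^{-(mn-γ)} - (Σ_{j=1}^m |z-y_j|)^{-(mn-γ)} ≥ C·|B|^{1/n}·(|B|^{1/n} + Σ_{j=1}^m |x_B-y_j|)^{-(mn-γ+1)}, where A, C_1, C_2 are the sets associated to B defined in the context. -/
open MeasureTheory Metric Set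
open scoped ENNReal NNReal BigOperators Classical

noncomputable section

/-- Bernoulli-type convexity bound for negative powers. -/
theorem bern_aux {β a b : ℝ} (hβ : 0 < β) (ha : 0 < a) (hab : a ≤ b) :
    min β 1 * (b ^ (-(β+1)) * (b - a)) ≤ a ^ (-β) - b ^ (-β) := by
  have hb : 0 < b := ha.trans_le hab
  set t := a / b with ht
  have ht0 : 0 < t := div_pos ha hb
  have ht1 : t ≤ 1 := (div_le_one hb).mpr hab
  have hmin0 : 0 ≤ min β 1 := le_min hβ.le one_pos.le
  have key : min β 1 * (1 - t) ≤ 1 - t ^ β := by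
    rcases le_total β 1 with h | h
    · have hber := rpow_one_add_le_one_add_mul_self (s := t - 1) (by linarith) hβ.le h
      have h1 : (1:ℝ) + (t-1) = t := by ring
      rw [h1] at hber
      rw [min_eq_left h]; nlinarith
    · have hm : t ^ β ≤ t ^ (1:ℝ) := Real.rpow_le_rpow_of_exponent_ge ht0 ht1 h
      rw [Real.rpow_one] at hm; rw [min_eq_right h]; nlinarith
  have htneg : 1 ≤ t ^ (-β) := by
    have := Real.rpow_le_rpow_of_exponent_ge ht0 ht1 (by linarith : -β ≤ 0)
    simpa using this
  have tmul : t ^ (-β) * t ^ β = 1 := by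
    rw [← Real.rpow_add ht0]; simp
  have ea : a ^ (-β) = t ^ (-β) * b ^ (-β) := by
    rw [ht, Real.div_rpow ha.le hb.le, div_mul_cancel₀]
    exact (Real.rpow_pos_of_pos hb _).ne'
  have hsplit : a ^ (-β) - b ^ (-β) = b ^ (-β) * (t ^ (-β) * (1 - t ^ β)) := by
    linear_combination ea + b ^ (-β) * tmul
  have e2 : b ^ (-(β+1)) * (b - a) = b ^ (-β) * (1 - t) := by
    rw [show -(β+1) = -β + (-1) by ring, Real.rpow_add hb, Real.rpow_neg_one, ht]
    field_simp
  rw [hsplit, e2]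
  have hbneg : (0:ℝ) ≤ b ^ (-β) := (Real.rpow_pos_of_pos hb _).le
  have hnn : 0 ≤ 1 - t ^ β := le_trans (mul_nonneg hmin0 (by linarith)) key
  have h2 : min β 1 * (1 - t) ≤ t ^ (-β) * (1 - t ^ β) :=
    key.trans (le_mul_of_one_le_left hnn htneg)
  calc min β 1 * (b ^ (-β) * (1 - t)) = b ^ (-β) * (min β 1 * (1 - t)) := by ring
    _ ≤ b ^ (-β) * (t ^ (-β) * (1 - t ^ β)) := mul_le_mul_of_nonneg_left h2 hbneg

theorem coord_dist_le {n : ℕ} (w c : Rn n) (i : Fin n) : dist (w i) (c i) ≤ dist w c := by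
  rw [EuclideanSpace.dist_eq]
  refine le_trans ?_ (Real.sqrt_le_sqrt (Finset.single_le_sum
    (f := fun i => dist (w i) (c i) ^ 2) (fun i _ => sq_nonneg _) (Finset.mem_univ i)))
  rw [Real.sqrt_sq dist_nonneg]

theorem dist_sq_eq_sum {n : ℕ} (w c : Rn n) : dist w c ^ 2 = ∑ i, (w i - c i)^2 := by
  rw [EuclideanSpace.dist_eq, Real.sq_sqrt (Finset.sum_nonneg fun i _ => sq_nonneg _)]
  exact Finset.sum_congr rfl fun i _ => by rw [Real.dist_eq, sq_abs]

theorem norm_uvec {n : ℕ} : ‖uvec n‖ = Real.sqrt n := by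
  simp [EuclideanSpace.norm_eq, uvec]

theorem zdist_aux {n : ℕ} {xB : Rn n} {R : ℝ} (hR : 0 < R) {z : Rn n}
    (hz : z ∈ C2set xB R) : dist z xB ≤ R := by
  obtain ⟨hz1, _⟩ := hz
  have h1 : dist z (xB - (R/(3*Real.sqrt n)) • uvec n) < 2*R/3 := mem_ball.mp hz1
  have h2 : dist (xB - (R/(3*Real.sqrt n)) • uvec n) xB ≤ R/3 := by
    rw [dist_eq_norm, sub_sub_cancel_left, norm_neg, norm_smul, norm_uvec, Real.norm_eq_abs]
    rcases eq_or_lt_of_le (Real.sqrt_nonneg (n:ℝ)) with h | h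
    · rw [← h]; simp; positivity
    · rw [abs_of_nonneg (by positivity)]
      have he : R/(3*Real.sqrt n) * Real.sqrt n = R/3 := by field_simp
      rw [he]
  calc dist z xB ≤ dist z (xB - (R/(3*Real.sqrt n)) • uvec n) +
        dist (xB - (R/(3*Real.sqrt n)) • uvec n) xB := dist_triangle _ _ _
    _ ≤ R := by linarith

set_option maxHeartbeats 1000000 in
theorem geom_aux {n : ℕ} (hn : 1 ≤ n) {xB : Rn n} {R : ℝ} (hR : 0 < R)
    {x z w : Rn n} (hx : x ∈ C1set xB R) (hz : z ∈ C2set xB R) (hw : w ∈ Aset xB) :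
    R / 12 ≤ dist x w ∧ dist x w + R / Real.sqrt n / 100 ≤ dist z w := by
  obtain ⟨hx1, hx2⟩ := hx
  obtain ⟨hz1, hz2⟩ := hz
  set q := Real.sqrt n with hq
  have hn1 : (1:ℝ) ≤ (n:ℝ) := by exact_mod_cast hn
  have hqq : q^2 = n := Real.sq_sqrt (by positivity)
  have hq1 : 1 ≤ q := by nlinarith [Real.sqrt_nonneg (n:ℝ)]
  have hq0 : 0 < q := lt_of_lt_of_le one_pos hq1
  set u := R / q with hu
  have hu0 : 0 < u := div_pos hR hq0
  have hqu : q * u = R := by rw [hu]; field_simp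
  have huR : u ≤ R := by rw [hu]; exact div_le_self hR.le hq1
  have hxc : ∀ i, xB i - u/6 < x i ∧ x i ≤ xB i - u/12 := by
    intro i
    have h2 := hx2 i
    have h1 := (coord_dist_le x _ i).trans_lt (mem_ball.mp hx1)
    have hc : (xB - (R / (12 * q)) • uvec n) i = xB i - u/12 := by
      simp [uvec, hu]; ring
    have hrad : R/(12*q) = u/12 := by rw [hu]; ring
    rw [hc] at h2
    rw [hc, hrad, Real.dist_eq] at h1
    have := abs_lt.mp h1
    exact ⟨by linarith [this.1], h2⟩
  have hzc : ∀ i, z i ≤ xB i - u/3 := by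
    intro i
    have h2 := hz2 i
    have hc : (xB - (R / (3 * q)) • uvec n) i = xB i - u/3 := by
      simp [uvec, hu]; ring
    rwa [hc] at h2
  have hwc : ∀ i, xB i ≤ w i := hw
  have ha : ∀ i, u/12 ≤ w i - x i := fun i => by
    have := (hxc i).2; have := hwc i; linarith
  have hxw2 : dist x w ^ 2 = ∑ i, (w i - x i)^2 := by
    rw [dist_sq_eq_sum]; exact Finset.sum_congr rfl fun i _ => by ring
  have hzw2 : dist z w ^ 2 = ∑ i, (w i - z i)^2 := by
    rw [dist_sq_eq_sum]; exact Finset.sum_congr rfl fun i _ => by ring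
  have hxwlb : R / 12 ≤ dist x w := by
    have h2 : (R/12)^2 ≤ dist x w ^2 := by
      rw [hxw2]
      have hconst : ∑ _i : Fin n, (u/12:ℝ)^2 = n * (u/12)^2 := by
        rw [Finset.sum_const, Finset.card_univ, Fintype.card_fin, nsmul_eq_mul]
      have hle : ∑ _i : Fin n, (u/12:ℝ)^2 ≤ ∑ i, (w i - x i)^2 :=
        Finset.sum_le_sum fun i _ => pow_le_pow_left₀ (by positivity) (ha i) 2
      have : (R/12)^2 = (n:ℝ) * (u/12)^2 := by
        rw [← hqq]; nlinarith [hqu]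
      linarith [hconst ▸ hle, this.le]
    calc R/12 = Real.sqrt ((R/12)^2) := (Real.sqrt_sq (by positivity)).symm
      _ ≤ Real.sqrt (dist x w^2) := Real.sqrt_le_sqrt h2
      _ = dist x w := Real.sqrt_sq dist_nonneg
  refine ⟨hxwlb, ?_⟩
  set s := dist x w with hsdef
  have hs0 : 0 ≤ s := dist_nonneg
  have hsum_a : s ≤ ∑ i, (w i - x i) := by
    have h := Finset.sum_sq_le_sq_sum_of_nonneg
      (s := Finset.univ) (f := fun i : Fin n => w i - x i)
      (fun i _ => le_trans (by linarith : (0:ℝ) ≤ u/12) (ha i))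
    have h' : ∑ i, (w i - x i)^2 ≤ (∑ i, (w i - x i))^2 := h
    have hS0 : 0 ≤ ∑ i, (w i - x i) :=
      Finset.sum_nonneg fun i _ => le_trans (by linarith : (0:ℝ) ≤ u/12) (ha i)
    nlinarith [hxw2, hs0, hS0, h']
  have hkey2 : (s + u/100)^2 ≤ dist z w ^ 2 := by
    rw [hzw2]
    have hterm : ∀ i, (w i - x i)^2 + (u/3) * (w i - x i) ≤ (w i - z i)^2 := by
      intro i
      have hd : u/6 ≤ x i - z i := by
        have := (hxc i).1; have := hzc i; linarith
      have hai := ha i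
      nlinarith
    have hsum : ∑ i, ((w i - x i)^2 + (u/3)*(w i - x i)) ≤ ∑ i, (w i - z i)^2 :=
      Finset.sum_le_sum fun i _ => hterm i
    have hexp : ∑ i, ((w i - x i)^2 + (u/3)*(w i - x i))
        = s^2 + (u/3) * ∑ i, (w i - x i) := by
      rw [Finset.sum_add_distrib, ← Finset.mul_sum, ← hxw2]
    have hR12 : R ≤ 12 * s := by linarith [hxwlb]
    have hu12s : u ≤ 12 * s := le_trans huR hR12
    have hfst : (s + u/100)^2 ≤ s^2 + (u/3) * s := by
      nlinarith [mul_le_mul_of_nonneg_left hu12s hu0.le]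
    have hsnd : s^2 + (u/3)*s ≤ s^2 + (u/3) * ∑ i, (w i - x i) := by
      nlinarith [hsum_a, hu0]
    linarith [hexp ▸ hsum]
  have hfin : s + u/100 ≤ dist z w := by
    have h0 : (0:ℝ) ≤ s + u/100 := by positivity
    calc s + u/100 = Real.sqrt ((s+u/100)^2) := (Real.sqrt_sq h0).symm
      _ ≤ Real.sqrt (dist z w^2) := Real.sqrt_le_sqrt hkey2
      _ = dist z w := Real.sqrt_sq dist_nonneg
  have : R / q / 100 = u / 100 := by rw [hu]
  linarith [this ▸ hfin]


set_option maxHeartbeats 1000000 in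
/-- the pointwise kernel-difference lower bound on the sets
`A`, `C₁`, `C₂` associated to a ball `B(x_B,R)`. -/
theorem statement10 {n m : ℕ} (hn : 1 ≤ n) (hm : 1 ≤ m) (γ : ℝ) (hγ0 : 0 < γ)
    (hγ : γ < m * n) :
    ∃ C : ℝ, 0 < C ∧ ∀ (xB : Rn n) (R : ℝ), 0 < R →
      ∀ x ∈ C1set xB R, ∀ z ∈ C2set xB R, ∀ y : Fin m → Rn n,
        (∀ j, y j ∈ Aset xB) →
        C * (volume (ball xB R)).toReal ^ ((n : ℝ)⁻¹) *
            ((volume (ball xB R)).toReal ^ ((n : ℝ)⁻¹) + ∑ j, dist xB (y j)) ^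
              (-((m : ℝ) * n - γ + 1)) ≤
          (∑ j, dist x (y j)) ^ (-((m : ℝ) * n - γ)) -
            (∑ j, dist z (y j)) ^ (-((m : ℝ) * n - γ)) := by
  have hn0 : (0:ℝ) < n := by exact_mod_cast hn
  have hm0 : (0:ℝ) < m := by exact_mod_cast hm
  have hm1 : (1:ℝ) ≤ m := by exact_mod_cast hm
  set β := (m:ℝ) * (n:ℝ) - γ with hβdef
  have hβ : 0 < β := by rw [hβdef]; linarith [hγ]
  haveI : Nontrivial (Rn n) := by
    refine nontrivial_of_ne (uvec n) 0 fun h => ?_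
    have h0 : uvec n ⟨0, hn⟩ = (0 : Rn n) ⟨0, hn⟩ := by rw [h]
    have : (1:ℝ) = 0 := h0
    norm_num at this
  set ω := (volume (ball (0 : Rn n) 1)).toReal with hωdef
  have hω : 0 < ω := ENNReal.toReal_pos (measure_ball_pos _ _ one_pos).ne'
    measure_ball_lt_top.ne
  set κ₀ := ω ^ ((n:ℝ)⁻¹) with hκdef
  have hκ0 : 0 < κ₀ := Real.rpow_pos_of_pos hω _
  have hminκ : 0 < min κ₀ 1 := lt_min hκ0 one_pos
  have hminβ : 0 < min β 1 := lt_min hβ one_pos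
  have hq0 : (0:ℝ) < Real.sqrt n := Real.sqrt_pos.mpr hn0
  refine ⟨min β 1 * (m:ℝ) ^ (-(β+1)) * (min κ₀ 1) ^ (β+1) / (100 * Real.sqrt n * κ₀),
    by positivity, ?_⟩
  intro xB R hR x hx z hz y hy
  have hκeq : (volume (ball xB R)).toReal ^ ((n:ℝ)⁻¹) = κ₀ * R := by
    have hVol : volume (ball xB R) = ENNReal.ofReal (R ^ n) * volume (ball (0:Rn n) 1) := by
      have := Measure.addHaar_ball (μ := volume) xB hR.le
      rwa [finrank_euclideanSpace_fin] at this
    rw [hVol, ENNReal.toReal_mul, ENNReal.toReal_ofReal (by positivity), ← hωdef,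
      Real.mul_rpow (by positivity) hω.le, ← Real.rpow_natCast R n,
      ← Real.rpow_mul hR.le, mul_inv_cancel₀ (by exact_mod_cast hn0.ne' : (n:ℝ) ≠ 0),
      Real.rpow_one, mul_comm, hκdef]
  rw [hκeq]
  set D := ∑ j, dist xB (y j) with hD
  have hD0 : 0 ≤ D := Finset.sum_nonneg fun j _ => dist_nonneg
  set Sx := ∑ j, dist x (y j) with hSxdef
  set Sz := ∑ j, dist z (y j) with hSzdef
  have hgeo := fun j => geom_aux hn hR hx hz (hy j)
  have hSx : R/12 ≤ Sx := by
    have h := Finset.sum_le_sum fun j (_ : j ∈ Finset.univ) => (hgeo j).1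
    rw [Finset.sum_const, Finset.card_univ, Fintype.card_fin, nsmul_eq_mul] at h
    nlinarith [hR]
  have hSx0 : 0 < Sx := lt_of_lt_of_le (by positivity) hSx
  have hc100 : (0:ℝ) < R/Real.sqrt n/100 := by positivity
  have hu100 : Sx + R/Real.sqrt n/100 ≤ Sz := by
    have h := Finset.sum_le_sum fun j (_ : j ∈ Finset.univ) => (hgeo j).2
    rw [Finset.sum_add_distrib, Finset.sum_const, Finset.card_univ, Fintype.card_fin,
      nsmul_eq_mul] at h
    nlinarith [hc100]
  have hSxSz : Sx ≤ Sz := by linarith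
  have hSz0 : 0 < Sz := lt_of_lt_of_le hSx0 hSxSz
  have hRD : 0 < R + D := by linarith
  have hSzle : Sz ≤ (m:ℝ)*(R+D) := by
    have h1 : ∀ j, dist z (y j) ≤ R + dist xB (y j) := fun j =>
      calc dist z (y j) ≤ dist z xB + dist xB (y j) := dist_triangle _ _ _
        _ ≤ R + dist xB (y j) := by linarith [zdist_aux hR hz]
    have h := Finset.sum_le_sum fun j (_ : j ∈ Finset.univ) => h1 j
    rw [Finset.sum_add_distrib, Finset.sum_const, Finset.card_univ, Fintype.card_fin,
      nsmul_eq_mul] at h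
    nlinarith [hD0]
  have hbern := bern_aux hβ hSx0 hSxSz
  have h1 : ((m:ℝ)*(R+D))^(-(β+1)) ≤ Sz^(-(β+1)) :=
    Real.rpow_le_rpow_of_nonpos hSz0 hSzle (by linarith)
  have h2 : ((m:ℝ)*(R+D))^(-(β+1)) * (R/Real.sqrt n/100) ≤ Sz^(-(β+1)) * (Sz - Sx) :=
    mul_le_mul h1 (by linarith) hc100.le (Real.rpow_pos_of_pos hSz0 _).le
  have h4 : (κ₀*R + D)^(-(β+1)) ≤ (min κ₀ 1)^(-(β+1)) * (R+D)^(-(β+1)) := by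
    have hbase : min κ₀ 1 * (R+D) ≤ κ₀*R + D := by
      have hl : min κ₀ 1 ≤ κ₀ := min_le_left _ _
      have hr : min κ₀ 1 ≤ 1 := min_le_right _ _
      nlinarith [hR, hD0, hminκ]
    have h := Real.rpow_le_rpow_of_nonpos (by positivity) hbase (by linarith : -(β+1) ≤ 0)
    rwa [Real.mul_rpow hminκ.le hRD.le] at h
  calc min β 1 * (m:ℝ) ^ (-(β+1)) * (min κ₀ 1) ^ (β+1) / (100 * Real.sqrt n * κ₀) *
        (κ₀ * R) * (κ₀ * R + D) ^ (-(β+1))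
      ≤ min β 1 * (m:ℝ) ^ (-(β+1)) * (min κ₀ 1) ^ (β+1) / (100 * Real.sqrt n * κ₀) *
        (κ₀ * R) * ((min κ₀ 1)^(-(β+1)) * (R+D)^(-(β+1))) :=
        mul_le_mul_of_nonneg_left h4 (by positivity)
    _ = min β 1 * (((m:ℝ)*(R+D))^(-(β+1)) * (R/Real.sqrt n/100)) := by
        rw [Real.mul_rpow hm0.le hRD.le, Real.rpow_neg hminκ.le (β+1)]
        have hK : (0:ℝ) < (min κ₀ 1) ^ (β+1) := Real.rpow_pos_of_pos hminκ _
        field_simp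
    _ ≤ min β 1 * (Sz^(-(β+1)) * (Sz - Sx)) := mul_le_mul_of_nonneg_left h2 hminβ.le
    _ ≤ Sx ^ (-β) - Sz ^ (-β) := hbern
end
end
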